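/- arXiv:1004.0323 — 5 statements merged into one kernel-verified Lean document; each statement's English description precedes it below -/
import Mathlib

section
/- Let F be a closed transitive relation on a locally compact, σ-compact Hausdorff space X, and let x ∈ X with (x,x) ∉ F. Then there exists a compact neighborhood U of x (x lies in the interior of U) such that the three sets U, F(U), and F⁻¹(U) are pairwise disjoint. -/
open Topology


/-- The image of a set `A` under a relation `f ⊆ X × Y`. -/
def relImage {X Y : Type*} (f : Set (X × Y)) (A : Set X) : Set Y :=
  {y | ∃ x ∈ A, (x, y) ∈ f}

/-- The reverse (inverse) relation of `f ⊆ X × Y`. -/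
def relInv {X Y : Type*} (f : Set (X × Y)) : Set (Y × X) :=
  {p | (p.2, p.1) ∈ f}

/-- Composition of relations: `relComp g f = g ∘ f` (first `f`, then `g`). -/
def relComp {X Y Z : Type*} (g : Set (Y × Z)) (f : Set (X × Y)) : Set (X × Z) :=
  {p | ∃ y, (p.1, y) ∈ f ∧ (y, p.2) ∈ g}

/-- A relation on `X` is transitive. -/
def RelTrans {X : Type*} (f : Set (X × X)) : Prop :=
  ∀ x y z : X, (x, y) ∈ f → (y, z) ∈ f → (x, z) ∈ f

/-- `gRel f` is the smallest closed transitive relation containing `f`: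
the intersection of all closed transitive relations containing `f`. -/
def gRel {X : Type*} [TopologicalSpace X] (f : Set (X × X)) : Set (X × X) :=
  ⋂₀ {g : Set (X × X) | f ⊆ g ∧ IsClosed g ∧ RelTrans g}

/-- Let `F` be a closed transitive relation on a locally compact,
σ-compact Hausdorff space `X` and `x` a point with `(x,x) ∉ F`.  Then `x` has a
compact neighborhood `U` such that `U`, `F(U)` and `F⁻¹(U)` are pairwise disjoint. -/
theorem exists_compact_nhd_disjoint_images
    {X : Type*} [TopologicalSpace X] [LocallyCompactSpace X]
    [SigmaCompactSpace X] [T2Space X]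
    (F : Set (X × X)) (hF : IsClosed F) (hFt : RelTrans F)
    (x : X) (hx : (x, x) ∉ F) :
    ∃ U : Set X, IsCompact U ∧ x ∈ interior U ∧
      Disjoint U (relImage F U) ∧
      Disjoint U (relImage (relInv F) U) ∧
      Disjoint (relImage F U) (relImage (relInv F) U) := by
  have hopen : IsOpen Fᶜ := hF.isOpen_compl
  have hmem : Fᶜ ∈ 𝓝 (x, x) := hopen.mem_nhds hx
  rw [mem_nhds_prod_iff] at hmem
  obtain ⟨u, hu, v, hv, huv⟩ := hmem
  obtain ⟨s, hs, hsub, hscomp⟩ := local_compact_nhds (Filter.inter_mem hu hv)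
  -- key: no pair of points of s is related by F
  have key : ∀ a ∈ s, ∀ b ∈ s, (a, b) ∉ F := by
    intro a ha b hb hab
    exact huv (Set.mk_mem_prod (hsub ha).1 (hsub hb).2) hab
  refine ⟨s, hscomp, mem_interior_iff_mem_nhds.2 hs, ?_, ?_, ?_⟩
  · rw [Set.disjoint_left]
    rintro b hb ⟨a, ha, hab⟩
    exact key a ha b hb hab
  · rw [Set.disjoint_left]
    rintro b hb ⟨a, ha, hab⟩
    exact key b hb a ha hab
  · rw [Set.disjoint_left]
    rintro y ⟨a, ha, hay⟩ ⟨b, hb, hyb⟩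
    exact key a ha b hb (hFt a y b hay hyb)
end

section
/- Let F be a closed transitive relation on a locally compact, σ-compact Hausdorff space X. Let E ⊆ X be a compact set such that for some x₀ ∈ E one has (x₀,x₀) ∈ F and E = F(x₀) ∩ F⁻¹(x₀). Assume that for every neighborhood U of E the set F(U) ∩ F⁻¹(U) does not have compact closure. Then for every compact Hausdorff space X̂ containing X as a dense open subspace, with F̂ the closure of F in X̂ × X̂, there exist z ∈ X̂ ∖ X and a, b ∈ E such that (a,z) ∈ F̂ and (z,b) ∈ F̂. -/
/-- Let `F` be a closed transitive relation on a locally compact,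
σ-compact Hausdorff space `X`, and `E = F(x₀) ∩ F⁻¹(x₀)` a compact equivalence class
of a point `x₀` with `(x₀,x₀) ∈ F`.  If for every neighborhood `U` of `E` the set
`F(U) ∩ F⁻¹(U)` does not have compact closure, then in every proper compactification
`(Xh, j)` there is a point `z` at infinity with `(j a, z), (z, j b) ∈ F̂` for some
`a, b ∈ E`. -/
theorem class_at_infinity_of_unbounded
    {X : Type*} [TopologicalSpace X] [LocallyCompactSpace X]
    [SigmaCompactSpace X] [T2Space X]
    (F : Set (X × X)) (hF : IsClosed F) (hFt : RelTrans F)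
    (E : Set X) (hE : IsCompact E)
    (x₀ : X) (hx₀E : x₀ ∈ E) (hx₀F : (x₀, x₀) ∈ F)
    (hEeq : E = relImage F {x₀} ∩ relImage (relInv F) {x₀})
    (hbig : ∀ U : Set X, E ⊆ interior U →
      ¬ IsCompact (closure (relImage F U ∩ relImage (relInv F) U)))
    {Xh : Type*} [TopologicalSpace Xh] [CompactSpace Xh] [T2Space Xh]
    (j : X → Xh) (hj : Topology.IsEmbedding j)
    (hopen : IsOpen (Set.range j)) (hdense : Dense (Set.range j)) :
    ∃ z : Xh, z ∉ Set.range j ∧ ∃ a ∈ E, ∃ b ∈ E,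
      (j a, z) ∈ closure (Prod.map j j '' F) ∧
      (z, j b) ∈ closure (Prod.map j j '' F) := by
  classical
  have hjc : Continuous j := hj.continuous
  have hjinj : Function.Injective j := hj.injective
  -- basis sets
  set S : Set X → Set X → Set (X × X × X) := fun U K =>
    {p | p.1 ∈ U ∧ p.2.2 ∈ U ∧ p.2.1 ∉ K ∧ (p.1, p.2.1) ∈ F ∧ (p.2.1, p.2.2) ∈ F} with hSdef
  have hSne : ∀ U K : Set X, E ⊆ interior U → IsCompact K → (S U K).Nonempty := by
    intro U K hU hK
    by_contra h
    rw [Set.not_nonempty_iff_eq_empty] at h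
    apply hbig U hU
    refine IsCompact.of_isClosed_subset hK isClosed_closure ?_
    refine closure_minimal ?_ hK.isClosed
    rintro y ⟨⟨a, ha, haF⟩, ⟨b, hb, hbF⟩⟩
    by_contra hyK
    have : (a, y, b) ∈ S U K := ⟨ha, hb, hyK, haF, hbF⟩
    rw [h] at this
    exact this
  -- the filter
  let ι := {U : Set X // E ⊆ interior U} × {K : Set X // IsCompact K}
  haveI : Nonempty ι := ⟨⟨Set.univ, by simp⟩, ⟨∅, isCompact_empty⟩⟩
  let f : Filter (X × X × X) := ⨅ i : ι, Filter.principal (S i.1.1 i.2.1)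
  have hdir : Directed (· ≥ ·) (fun i : ι => Filter.principal (S i.1.1 i.2.1)) := by
    rintro ⟨U, K⟩ ⟨U', K'⟩
    refine ⟨⟨⟨U.1 ∩ U'.1, ?_⟩, ⟨K.1 ∪ K'.1, K.2.union K'.2⟩⟩, ?_, ?_⟩
    · rw [interior_inter]; exact Set.subset_inter U.2 U'.2
    · refine Filter.principal_mono.mpr ?_
      rintro p ⟨h1, h2, h3, h4, h5⟩
      exact ⟨h1.1, h2.1, fun hk => h3 (Or.inl hk), h4, h5⟩
    · refine Filter.principal_mono.mpr ?_
      rintro p ⟨h1, h2, h3, h4, h5⟩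
      exact ⟨h1.2, h2.2, fun hk => h3 (Or.inr hk), h4, h5⟩
  haveI hfne : f.NeBot := Filter.iInf_neBot_of_directed' hdir
    (fun i => Filter.principal_neBot_iff.mpr (hSne _ _ i.1.2 i.2.2))
  have hfS : ∀ (U K : Set X) (hU : E ⊆ interior U) (hK : IsCompact K), S U K ∈ f := by
    intro U K hU hK
    exact Filter.mem_iInf_of_mem (⟨⟨U, hU⟩, ⟨K, hK⟩⟩ : ι) (Filter.mem_principal_self _)
  -- cluster point in the compact space
  let Φ : X × X × X → Xh × Xh × Xh := fun p => (j p.1, j p.2.1, j p.2.2)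
  have hΦc : Continuous Φ := by fun_prop
  let g : Filter (Xh × Xh × Xh) := Filter.map Φ f
  haveI : g.NeBot := Filter.NeBot.map hfne Φ
  obtain ⟨c, hc⟩ := exists_clusterPt_of_compactSpace g
  obtain ⟨α, z, β⟩ := c
  -- cluster points of coordinate filters
  have hc1 : ClusterPt α (Filter.map (fun p : X × X × X => j p.1) f) := by
    have := hc.map (f := fun q : Xh × Xh × Xh => q.1) (continuous_fst.continuousAt)
      (Filter.tendsto_map' Filter.tendsto_map)
    simpa [g, Φ, Filter.map_map, Function.comp_def] using this
  have hc2 : ClusterPt z (Filter.map (fun p : X × X × X => j p.2.1) f) := by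
    have := hc.map (f := fun q : Xh × Xh × Xh => q.2.1)
      ((continuous_fst.comp continuous_snd).continuousAt)
      (Filter.tendsto_map' Filter.tendsto_map)
    simpa [g, Φ, Filter.map_map, Function.comp_def] using this
  have hc3 : ClusterPt β (Filter.map (fun p : X × X × X => j p.2.2) f) := by
    have := hc.map (f := fun q : Xh × Xh × Xh => q.2.2)
      ((continuous_snd.comp continuous_snd).continuousAt)
      (Filter.tendsto_map' Filter.tendsto_map)
    simpa [g, Φ, Filter.map_map, Function.comp_def] using this
  -- z is at infinity
  have hzinf : z ∉ Set.range j := by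
    rintro ⟨x, rfl⟩
    obtain ⟨K, hK, hKx⟩ := exists_compact_mem_nhds x
    have hV : j '' interior K ∈ nhds (j x) := by
      have hopenV : IsOpen (j '' interior K) :=
        (⟨hj, hopen⟩ : Topology.IsOpenEmbedding j).isOpenMap _ isOpen_interior
      exact hopenV.mem_nhds ⟨x, mem_interior_iff_mem_nhds.mpr hKx, rfl⟩
    have hmem : (j '' interior K)ᶜ ∈ Filter.map (fun p : X × X × X => j p.2.1) f := by
      refine Filter.mem_map.mpr (Filter.mem_of_superset
        (hfS Set.univ K (by simp) hK) ?_)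
      rintro p ⟨-, -, h3, -, -⟩ hp
      obtain ⟨w, hw, hwj⟩ := hp
      exact h3 (hjinj hwj ▸ interior_subset hw)
    have := hc2.neBot.nonempty_of_mem (Filter.inter_mem_inf hV hmem)
    obtain ⟨q, hq1, hq2⟩ := this
    exact hq2 hq1
  -- α and β are in j '' E
  have key : ∀ (u : X × X × X → X) (w : Xh), (∀ p : X × X × X, p ∈ S (Set.univ) ∅ → True) →
      ClusterPt w (Filter.map (fun p => j (u p)) f) →
      (∀ (U : Set X), E ⊆ interior U → {p : X × X × X | u p ∈ U} ∈ f) →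
      w ∈ j '' E := by
    intro u w _ hw hu
    by_contra hwE
    have hjE : IsCompact (j '' E) := hE.image hjc
    obtain ⟨W, V, hWo, hVo, hWsub, hVsub, hdisj⟩ :=
      SeparatedNhds.of_isCompact_isCompact (isCompact_singleton (x := w)) hjE
        (by simpa [Set.disjoint_singleton_left] using hwE)
    have hU : E ⊆ interior (j ⁻¹' V) := by
      rw [(hVo.preimage hjc).interior_eq]
      intro e he
      exact hVsub ⟨e, he, rfl⟩
    have hmem : V ∈ Filter.map (fun p => j (u p)) f := by
      refine Filter.mem_map.mpr (Filter.mem_of_superset (hu _ hU) ?_)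
      intro p hp
      exact hp
    have hWnhds : W ∈ nhds w := hWo.mem_nhds (hWsub rfl)
    obtain ⟨q, hq1, hq2⟩ := hw.neBot.nonempty_of_mem (Filter.inter_mem_inf hWnhds hmem)
    exact Set.disjoint_left.mp hdisj hq1 hq2
  have hαE : α ∈ j '' E := by
    refine key (fun p => p.1) α (fun _ _ => trivial) hc1 ?_
    intro U hU
    exact Filter.mem_of_superset (hfS U ∅ hU isCompact_empty) (fun p hp => hp.1)
  have hβE : β ∈ j '' E := by
    refine key (fun p => p.2.2) β (fun _ _ => trivial) hc3 ?_
    intro U hU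
    exact Filter.mem_of_superset (hfS U ∅ hU isCompact_empty) (fun p hp => hp.2.1)
  obtain ⟨a, haE, rfl⟩ := hαE
  obtain ⟨b, hbE, rfl⟩ := hβE
  -- closure memberships
  have haz : (j a, z) ∈ closure (Prod.map j j '' F) := by
    have hcl : ClusterPt (j a, z) (Filter.map (fun p : X × X × X => (j p.1, j p.2.1)) f) := by
      have := hc.map (f := fun q : Xh × Xh × Xh => (q.1, q.2.1))
        ((continuous_fst.prodMk (continuous_fst.comp continuous_snd)).continuousAt)
        (Filter.tendsto_map' Filter.tendsto_map)
      simpa [g, Φ, Filter.map_map, Function.comp_def] using this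
    refine mem_closure_iff_clusterPt.mpr (hcl.mono ?_)
    rw [Filter.le_principal_iff, Filter.mem_map]
    refine Filter.mem_of_superset (hfS Set.univ ∅ (by simp) isCompact_empty) ?_
    rintro p ⟨-, -, -, h4, -⟩
    exact ⟨(p.1, p.2.1), h4, rfl⟩
  have hzb : (z, j b) ∈ closure (Prod.map j j '' F) := by
    have hcl : ClusterPt (z, j b) (Filter.map (fun p : X × X × X => (j p.2.1, j p.2.2)) f) := by
      have := hc.map (f := fun q : Xh × Xh × Xh => (q.2.1, q.2.2))
        (((continuous_fst.comp continuous_snd).prodMk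
          (continuous_snd.comp continuous_snd)).continuousAt)
        (Filter.tendsto_map' Filter.tendsto_map)
      simpa [g, Φ, Filter.map_map, Function.comp_def] using this
    refine mem_closure_iff_clusterPt.mpr (hcl.mono ?_)
    rw [Filter.le_principal_iff, Filter.mem_map]
    refine Filter.mem_of_superset (hfS Set.univ ∅ (by simp) isCompact_empty) ?_
    rintro p ⟨-, -, -, -, h5⟩
    exact ⟨(p.2.1, p.2.2), h5, rfl⟩
  exact ⟨z, hzinf, a, haE, b, hbE, haz, hzb⟩
end

section
/- Let T be a closed subset of ℝ such that: (i) t, s ∈ T implies t + s ∈ T; (ii) t ∈ T implies t − 1 ∈ T; (iii) there exists t ∈ T with t > 0. Then either T = ℝ, or there exists a positive integer N such that T = { k / N : k ∈ ℤ }. In particular, T is an additive subgroup of ℝ. -/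
/-- Let `T ⊆ ℝ` be closed, closed under addition, closed under
subtraction of `1`, and containing some positive element.  Then either `T = ℝ` or
`T = (1/N)ℤ` for some positive integer `N`; in particular `T` is an additive
subgroup of `ℝ`. -/
theorem closed_subsemigroup_real
    (T : Set ℝ) (hT : IsClosed T)
    (hadd : ∀ t ∈ T, ∀ s ∈ T, t + s ∈ T)
    (hsub : ∀ t ∈ T, t - 1 ∈ T)
    (hpos : ∃ t ∈ T, 0 < t) :
    (T = Set.univ ∨ ∃ N : ℕ, 0 < N ∧ T = {x : ℝ | ∃ k : ℤ, x = (k : ℝ) / (N : ℝ)}) ∧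
      ∃ S : AddSubgroup ℝ, (S : Set ℝ) = T := by
  obtain ⟨t0, ht0T, ht0pos⟩ := hpos
  -- positive multiples stay in T
  have hnsmul : ∀ s ∈ T, ∀ m : ℕ, ((m : ℝ) + 1) * s ∈ T := by
    intro s hs m
    induction m with
    | zero => simpa using hs
    | succ n ih =>
      have h := hadd _ ih s hs
      have heq : ((n : ℝ) + 1) * s + s = (((n + 1 : ℕ) : ℝ) + 1) * s := by push_cast; ring
      rwa [heq] at h
  -- subtracting naturals stays in T
  have hsubn : ∀ s ∈ T, ∀ n : ℕ, s - (n : ℝ) ∈ T := by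
    intro s hs n
    induction n with
    | zero => simpa using hs
    | succ n ih =>
      have h := hsub _ ih
      have heq : s - (n : ℝ) - 1 = s - ((n + 1 : ℕ) : ℝ) := by push_cast; ring
      rwa [heq] at h
  set P : Set ℝ := T ∩ Set.Ioi 0 with hP
  have hPne : P.Nonempty := ⟨t0, ht0T, ht0pos⟩
  have hPbdd : BddBelow P := ⟨0, fun y hy => le_of_lt hy.2⟩
  set d := sInf P with hd
  have hd0 : 0 ≤ d := le_csInf hPne (fun y hy => le_of_lt hy.2)
  rcases eq_or_lt_of_le hd0 with hdz | hdpos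
  · -- dense case : T = ℝ
    have hdense : Dense T := by
      rw [Metric.dense_iff]
      intro x r hr
      obtain ⟨s, hsP, hsr⟩ := exists_lt_of_csInf_lt hPne (by rw [← hd, ← hdz]; exact hr)
      obtain ⟨hsT, hs0⟩ := hsP
      simp only [Set.mem_Ioi] at hs0
      set n : ℕ := ⌈s - x⌉₊ with hn
      have hxn : s ≤ x + n := by
        have := Nat.le_ceil (s - x)
        linarith
      have hxn0 : 0 < x + n := lt_of_lt_of_le hs0 hxn
      set m : ℕ := ⌈(x + n) / s⌉₊ with hm
      have hm1 : 1 ≤ m := by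
        rw [hm, Nat.one_le_ceil_iff]
        positivity
      have hms1 : x + n ≤ m * s := by
        have h := Nat.le_ceil ((x + n) / s)
        rw [div_le_iff₀ hs0] at h
        linarith
      have hms2 : (m : ℝ) * s < x + n + s := by
        have h := Nat.ceil_lt_add_one (show (0:ℝ) ≤ (x + n) / s by positivity)
        have h2 : (m : ℝ) * s < ((x + n) / s + 1) * s := by
          exact mul_lt_mul_of_pos_right h hs0
        rw [add_mul, div_mul_cancel₀ _ (ne_of_gt hs0)] at h2
        linarith
      have hyT : (m : ℝ) * s - n ∈ T := by
        obtain ⟨m', hm'⟩ : ∃ m', m = m' + 1 := ⟨m - 1, (Nat.succ_pred_eq_of_pos hm1).symm⟩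
        have h := hsubn _ (hnsmul s hsT m') n
        have heq : ((m' : ℝ) + 1) * s - n = (m : ℝ) * s - n := by
          rw [hm']; push_cast; ring
        rwa [heq] at h
      refine ⟨(m : ℝ) * s - n, ?_, hyT⟩
      rw [Metric.mem_ball, Real.dist_eq, abs_lt]
      constructor <;> linarith
    have hTuniv : T = Set.univ := by rw [← hT.closure_eq, hdense.closure_eq]
    exact ⟨Or.inl hTuniv, ⟨⊤, by rw [hTuniv, AddSubgroup.coe_top]⟩⟩
  · -- discrete case
    have hdT : d ∈ T := by
      have h1 := csInf_mem_closure hPne hPbdd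
      have h2 : closure P ⊆ closure T := closure_mono Set.inter_subset_left
      have h3 := h2 h1
      rwa [hT.closure_eq] at h3
    have hmin : ∀ y ∈ T, 0 < y → d ≤ y := fun y hy hy0 => csInf_le hPbdd ⟨hy, hy0⟩
    have hex : ∃ j : ℕ, 1 < ((j : ℝ) + 1) * d := by
      obtain ⟨j, hj⟩ := exists_nat_gt (1 / d)
      refine ⟨j, ?_⟩
      rw [div_lt_iff₀ hdpos] at hj
      nlinarith
    set m := Nat.find hex with hmdef
    have hmspec : 1 < ((m : ℝ) + 1) * d := Nat.find_spec hex
    have hcm : ((m : ℝ) + 1) * d - 1 ∈ T := by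
      have h := hsubn _ (hnsmul d hdT m) 1
      simpa using h
    have hcmpos : 0 < ((m : ℝ) + 1) * d - 1 := by linarith
    have hcmge : d ≤ ((m : ℝ) + 1) * d - 1 := hmin _ hcm hcmpos
    have hmd1 : 1 ≤ (m : ℝ) * d := by nlinarith
    have hm1 : 1 ≤ m := by
      by_contra h
      push_neg at h
      interval_cases m
      · simp at hmd1; linarith
    have hmd1' : (m : ℝ) * d ≤ 1 := by
      have h := Nat.find_min hex (show m - 1 < m from Nat.sub_lt hm1 one_pos)
      push_neg at h
      have hc : ((m - 1 : ℕ) : ℝ) = (m : ℝ) - 1 := by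
        rw [Nat.cast_sub hm1]; simp
      rw [hc] at h
      linarith
    have hmd : (m : ℝ) * d = 1 := le_antisymm hmd1' hmd1
    obtain ⟨m', hm'⟩ : ∃ m', m = m' + 1 := ⟨m - 1, (Nat.succ_pred_eq_of_pos hm1).symm⟩
    have h0T : (0 : ℝ) ∈ T := by
      have h := hsubn _ (hnsmul d hdT m') 1
      have heq : ((m' : ℝ) + 1) * d - ((1 : ℕ) : ℝ) = 0 := by
        have hcast : ((m' : ℝ) + 1) = (m : ℝ) := by rw [hm']; push_cast; ring
        rw [hcast, hmd]; norm_num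
      rwa [heq] at h
    -- natural multiples of d
    have hnmul : ∀ n : ℕ, (n : ℝ) * d ∈ T := by
      intro n
      induction n with
      | zero => simpa using h0T
      | succ k ih =>
        have h := hadd _ ih d hdT
        have heq : (k : ℝ) * d + d = ((k + 1 : ℕ) : ℝ) * d := by push_cast; ring
        rwa [heq] at h
    have hnegn : ∀ j : ℕ, -(j : ℝ) ∈ T := by
      intro j
      have h := hsubn 0 h0T j
      simpa using h
    have hnegmul : ∀ n : ℕ, -((n : ℝ) * d) ∈ T := by
      intro n
      have hle : n ≤ n * m := Nat.le_mul_of_pos_right n (by omega)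
      have h2 : ((n * m - n : ℕ) : ℝ) * d ∈ T := hnmul _
      have h := hadd _ (hnegn n) _ h2
      have heq : -(n : ℝ) + ((n * m - n : ℕ) : ℝ) * d = -((n : ℝ) * d) := by
        rw [Nat.cast_sub hle]
        push_cast
        have : (n : ℝ) * (m : ℝ) * d = n := by
          rw [mul_assoc, hmd, mul_one]
        nlinarith [this]
      rwa [heq] at h
    have hzmul : ∀ k : ℤ, (k : ℝ) * d ∈ T := by
      intro k
      rcases le_or_gt 0 k with hk | hk
      · have hc : ((k.toNat : ℕ) : ℝ) = (k : ℝ) := by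
          exact_mod_cast Int.toNat_of_nonneg hk
        rw [← hc]; exact hnmul _
      · have hc : (((-k).toNat : ℕ) : ℝ) = ((-k : ℤ) : ℝ) := by
          exact_mod_cast Int.toNat_of_nonneg (by omega : (0:ℤ) ≤ -k)
        have heq : (k : ℝ) * d = -((((-k).toNat : ℕ) : ℝ) * d) := by
          rw [hc]; push_cast; ring
        rw [heq]; exact hnegmul _
    have hsubset : ∀ x ∈ T, ∃ k : ℤ, x = (k : ℝ) * d := by
      intro x hx
      set k := ⌊x / d⌋ with hk
      have hfl : (k : ℝ) ≤ x / d := Int.floor_le _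
      have hfu : x / d < (k : ℝ) + 1 := Int.lt_floor_add_one _
      have hr1 : 0 ≤ x - (k : ℝ) * d := by
        have : (k : ℝ) * d ≤ x / d * d := mul_le_mul_of_nonneg_right hfl (le_of_lt hdpos)
        rw [div_mul_cancel₀ _ (ne_of_gt hdpos)] at this
        linarith
      have hr2 : x - (k : ℝ) * d < d := by
        have : x / d * d < ((k : ℝ) + 1) * d := mul_lt_mul_of_pos_right hfu hdpos
        rw [div_mul_cancel₀ _ (ne_of_gt hdpos)] at this
        nlinarith
      have hrT : x - (k : ℝ) * d ∈ T := by
        have h := hadd x hx _ (hzmul (-k))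
        have heq : x + ((-k : ℤ) : ℝ) * d = x - (k : ℝ) * d := by push_cast; ring
        rwa [heq] at h
      rcases eq_or_lt_of_le hr1 with heq | hlt
      · exact ⟨k, by linarith⟩
      · exact absurd (hmin _ hrT hlt) (by linarith)
    have hdval : d = 1 / (m : ℝ) := by
      field_simp
      linarith [hmd]
    have hmne : (m : ℝ) ≠ 0 := by positivity
    constructor
    · right
      refine ⟨m, hm1, ?_⟩
      ext x
      simp only [Set.mem_setOf_eq]
      constructor
      · intro hx
        obtain ⟨k, rfl⟩ := hsubset x hx
        exact ⟨k, by rw [hdval]; field_simp⟩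
      · rintro ⟨k, rfl⟩
        have h := hzmul k
        have heq : (k : ℝ) * d = (k : ℝ) / (m : ℝ) := by
          rw [hdval]; field_simp
        rwa [heq] at h
    · refine ⟨{ carrier := T,
                zero_mem' := h0T,
                add_mem' := fun ha hb => hadd _ ha _ hb,
                neg_mem' := ?_ }, rfl⟩
      intro a ha
      obtain ⟨k, rfl⟩ := hsubset a ha
      have h := hzmul (-k)
      have heq : ((-k : ℤ) : ℝ) * d = -((k : ℝ) * d) := by push_cast; ring
      rwa [heq] at h
end

section
/- Let X be a locally compact, σ-compact Hausdorff space and let φ : ℝ≥0 × X → X be a semiflow: φ is continuous, φ(0,x) = x for all x, and φ(t, φ(s,x)) = φ(t+s, x) for all t, s ≥ 0 and all x. Let φ^I = {(x, φ(t,x)) : t ∈ [0,1], x ∈ X} and 𝒢φ = 𝒢(φ^I). Let A be a closed subset of X with 𝒢φ(A) = A and let x₀ ∈ X ∖ A. Then there exists a continuous function L : X → [0,1] such that: L(x₀) = 0; L(y) = 1 for all y ∈ A; L(x) ≤ L(φ(t,x)) for all t ≥ 0 and x ∈ X; and there exists M ≥ 0 with |L(φ(t,x)) − L(x)| ≤ M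 · t for all t ≥ 0 and x ∈ X. -/
open NNReal

open Set Topology

section RelBasic

variable {Y : Type*} [TopologicalSpace Y]

theorem subset_gRel (f : Set (Y × Y)) : f ⊆ gRel f := fun p hp => by
  rw [gRel, Set.mem_sInter]
  rintro g ⟨h1, -, -⟩
  exact h1 hp

theorem gRel_isClosed (f : Set (Y × Y)) : IsClosed (gRel f) := by
  apply isClosed_sInter
  rintro g ⟨-, hc, -⟩
  exact hc

theorem gRel_trans (f : Set (Y × Y)) : RelTrans (gRel f) := by
  intro x y z hxy hyz
  rw [gRel, Set.mem_sInter] at *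
  intro g hg
  exact hg.2.2 x y z (hxy g hg) (hyz g hg)

theorem gRel_subset {f g : Set (Y × Y)} (h1 : f ⊆ g) (h2 : IsClosed g) (h3 : RelTrans g) :
    gRel f ⊆ g :=
  Set.sInter_subset_of_mem ⟨h1, h2, h3⟩

/-- The down-saturation of a compact set under a closed relation is closed. -/
theorem isClosed_downSat {ρ : Set (Y × Y)} (hρ : IsClosed ρ) {K : Set Y} (hK : IsCompact K) :
    IsClosed {x : Y | ∃ g ∈ K, (x, g) ∈ ρ} := by
  rw [← isOpen_compl_iff, isOpen_iff_forall_mem_open]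
  intro x hx
  simp only [mem_compl_iff, mem_setOf_eq, not_exists, not_and] at hx
  have h : ∀ g : K, ∃ U V : Set Y, IsOpen U ∧ IsOpen V ∧ x ∈ U ∧ (g : Y) ∈ V ∧
      U ×ˢ V ⊆ ρᶜ := by
    rintro ⟨g, hg⟩
    have hmem : (x, g) ∈ ρᶜ := hx g hg
    rcases isOpen_prod_iff.1 hρ.isOpen_compl x g hmem with ⟨U, V, hU, hV, hxU, hgV, hUV⟩
    exact ⟨U, V, hU, hV, hxU, hgV, hUV⟩
  choose U V hU hV hxU hgV hUV using h
  have hcover : K ⊆ ⋃ g : K, V g := fun g hg => Set.mem_iUnion.2 ⟨⟨g, hg⟩, hgV ⟨g, hg⟩⟩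
  rcases hK.elim_finite_subcover (fun g : K => V g) (fun g => hV g) hcover with ⟨t, ht⟩
  refine ⟨⋂ g ∈ t, U g, ?_, ?_, ?_⟩
  · intro y hy
    simp only [mem_compl_iff, mem_setOf_eq, not_exists, not_and]
    intro g hg hyg
    rcases Set.mem_iUnion₂.1 (ht hg) with ⟨i, hit, hgV'⟩
    exact hUV i ⟨Set.mem_iInter₂.1 hy i hit, hgV'⟩ hyg
  · exact isOpen_biInter_finset fun g _ => hU g
  · exact Set.mem_iInter₂.2 fun g _ => hxU g

theorem isClosed_upSat {ρ : Set (Y × Y)} (hρ : IsClosed ρ) {K : Set Y} (hK : IsCompact K) :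
    IsClosed {y : Y | ∃ g ∈ K, (g, y) ∈ ρ} := by
  have hswap : IsClosed (Prod.swap ⁻¹' ρ : Set (Y × Y)) := hρ.preimage continuous_swap
  exact isClosed_downSat hswap hK

end RelBasic

section CompactOrder

variable {C : Type*} [TopologicalSpace C] [CompactSpace C] [T2Space C]

/-- `m` is a down-set for the relation `r`. -/
def IsDownSet {C : Type*} (r : Set (C × C)) (m : Set C) : Prop :=
  ∀ ⦃x y : C⦄, (x, y) ∈ r → y ∈ m → x ∈ m

/-- `m` is an up-set for the relation `r`. -/
def IsUpSet {C : Type*} (r : Set (C × C)) (m : Set C) : Prop :=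
  ∀ ⦃x y : C⦄, (x, y) ∈ r → x ∈ m → y ∈ m

/-- Key interpolation: on a compact space, a closed down-set inside an open set can be
thickened to a closed down-set with room to spare. -/
theorem interp_down {r : Set (C × C)} (hrc : IsClosed r) (hrt : RelTrans r)
    (hrr : ∀ x : C, (x, x) ∈ r) {c u : Set C} (hcd : IsDownSet r c) (hcc : IsClosed c)
    (hu : IsOpen u) (hcu : c ⊆ u) :
    ∃ m : Set C, IsClosed m ∧ IsDownSet r m ∧ c ⊆ interior m ∧ m ⊆ u := by
  classical
  -- index type of open neighborhoods of `c`
  let Idx := {V : Set C // IsOpen V ∧ c ⊆ V}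
  let M : Idx → Set C := fun V => {x | ∃ g ∈ closure V.1, (x, g) ∈ r}
  have hMclosed : ∀ V : Idx, IsClosed (M V) :=
    fun V => isClosed_downSat hrc isClosed_closure.isCompact
  have hMdown : ∀ V : Idx, IsDownSet r (M V) := by
    rintro V x y hxy ⟨g, hg, hyg⟩
    exact ⟨g, hg, hrt x y g hxy hyg⟩
  have hVsubM : ∀ V : Idx, closure V.1 ⊆ M V := fun V z hz => ⟨z, hz, hrr z⟩
  have hMmono : ∀ V W : Idx, V.1 ⊆ W.1 → M V ⊆ M W := by
    rintro V W hVW x ⟨g, hg, hxg⟩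
    exact ⟨g, closure_mono hVW hg, hxg⟩
  -- Claim 1 : the intersection of all the M V is contained in u.
  have claim1 : (⋂ V : Idx, M V) ⊆ u := by
    intro x hx
    by_contra hxu
    have hZne : ∀ V : Idx, (closure V.1 ∩ {z | (x, z) ∈ r}).Nonempty := by
      intro V
      rcases Set.mem_iInter.1 hx V with ⟨g, hg, hxg⟩
      exact ⟨g, hg, hxg⟩
    have hZclosed : ∀ V : Idx, IsClosed (closure V.1 ∩ {z | (x, z) ∈ r}) := by
      intro V
      exact isClosed_closure.inter (hrc.preimage (Continuous.prodMk_right x))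
    have hne : (⋂ V : Idx, closure V.1 ∩ {z | (x, z) ∈ r}).Nonempty := by
      by_contra hne
      rw [Set.not_nonempty_iff_eq_empty] at hne
      have hempty : (univ : Set C) ∩ ⋂ V : Idx, closure V.1 ∩ {z | (x, z) ∈ r} = ∅ := by
        rw [hne, Set.inter_empty]
      rcases isCompact_univ.elim_finite_subfamily_closed _ hZclosed hempty with ⟨t, ht⟩
      -- build the intersection of the chosen neighborhoods
      have hWopen : IsOpen (⋂ V ∈ t, V.1 : Set C) := isOpen_biInter_finset fun V _ => V.2.1
      have hcW : c ⊆ ⋂ V ∈ t, V.1 := fun z hz => Set.mem_iInter₂.2 fun V _ => V.2.2 hz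
      have hW : (⟨⋂ V ∈ t, V.1, hWopen, hcW⟩ : Idx) ∈ (Set.univ : Set Idx) := trivial
      rcases hZne ⟨⋂ V ∈ t, V.1, hWopen, hcW⟩ with ⟨z, hz1, hz2⟩
      have : z ∈ (univ : Set C) ∩ ⋂ V ∈ t, (closure V.1 ∩ {z | (x, z) ∈ r}) := by
        refine ⟨trivial, Set.mem_iInter₂.2 fun V hV => ⟨?_, hz2⟩⟩
        exact closure_mono (Set.biInter_subset_of_mem hV) hz1
      rw [ht] at this
      exact this
    rcases hne with ⟨z, hz⟩
    have hzr : (x, z) ∈ r := by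
      have := Set.mem_iInter.1 hz ⟨univ, isOpen_univ, subset_univ c⟩
      exact this.2
    have hzc : z ∈ c := by
      by_contra hzc
      have hsep : SeparatedNhds c {z} :=
        (normal_separation hcc isClosed_singleton (by simpa using hzc))
      rcases hsep with ⟨O1, O2, hO1, hO2, hcO1, hzO2, hdisj⟩
      have hz1 := (Set.mem_iInter.1 hz ⟨O1, hO1, hcO1⟩).1
      have : z ∈ closure O1 := hz1
      have hsub : closure O1 ⊆ O2ᶜ := by
        apply closure_minimal _ hO2.isClosed_compl
        intro w hw hw2
        exact (Set.disjoint_left.1 hdisj) hw hw2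
      exact hsub this (hzO2 rfl)
    exact hxu (hcu (hcd hzr hzc))
  -- Claim 2 : some single M V is contained in u.
  have claim2 : ∃ V : Idx, M V ⊆ u := by
    have hempty : uᶜ ∩ ⋂ V : Idx, M V = ∅ := by
      apply Set.eq_empty_of_subset_empty
      rintro y ⟨hy1, hy2⟩
      exact hy1 (claim1 hy2)
    rcases (hu.isClosed_compl.isCompact).elim_finite_subfamily_closed _ hMclosed hempty
      with ⟨t, ht⟩
    have hWopen : IsOpen (⋂ V ∈ t, V.1 : Set C) := isOpen_biInter_finset fun V _ => V.2.1
    have hcW : c ⊆ ⋂ V ∈ t, V.1 := fun z hz => Set.mem_iInter₂.2 fun V _ => V.2.2 hz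
    refine ⟨⟨⋂ V ∈ t, V.1, hWopen, hcW⟩, ?_⟩
    intro y hy
    by_contra hyu
    have : y ∈ uᶜ ∩ ⋂ V ∈ t, M V := by
      refine ⟨hyu, Set.mem_iInter₂.2 fun V hV => ?_⟩
      exact hMmono _ _ (Set.biInter_subset_of_mem hV) hy
    rw [ht] at this
    exact this
  rcases claim2 with ⟨V, hV⟩
  refine ⟨M V, hMclosed V, hMdown V, ?_, hV⟩
  have : V.1 ⊆ M V := fun z hz => hVsubM V (subset_closure hz)
  exact fun z hz => interior_mono this (V.2.1.subset_interior_iff.2 Set.Subset.rfl (V.2.2 hz))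

end CompactOrder
section Enum

theorem exists_rat_enum : ∃ q : ℕ → ℚ, (∀ n, q n ∈ Set.Ioo (0:ℚ) 1) ∧
    Function.Injective q ∧ ∀ x ∈ Set.Ioo (0:ℚ) 1, ∃ n, q n = x := by
  classical
  have hinf : Infinite (Set.Ioo (0:ℚ) 1) := by
    apply Infinite.of_injective (fun n : ℕ => (⟨1/(n+2), by
      constructor
      · positivity
      · rw [div_lt_one (by positivity)]
        have : (1:ℚ) < 2 := one_lt_two
        have h2 : (2:ℚ) ≤ (n:ℚ) + 2 := by
          have : (0:ℚ) ≤ (n:ℚ) := Nat.cast_nonneg n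
          linarith
        linarith⟩ : Set.Ioo (0:ℚ) 1))
    intro a b hab
    have : (1:ℚ)/(a+2) = 1/(b+2) := congrArg Subtype.val hab
    have ha : ((a:ℚ)+2) ≠ 0 := by positivity
    have hb : ((b:ℚ)+2) ≠ 0 := by positivity
    field_simp at this
    exact_mod_cast (by linarith : (a:ℚ) = b)
  letI : Denumerable (Set.Ioo (0:ℚ) 1) := Denumerable.ofEncodableOfInfinite _
  refine ⟨fun n => ((Denumerable.eqv (Set.Ioo (0:ℚ) 1)).symm n : Set.Ioo (0:ℚ) 1).val,
    fun n => ((Denumerable.eqv (Set.Ioo (0:ℚ) 1)).symm n).2, ?_, ?_⟩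
  · intro a b hab
    have := Subtype.ext hab
    exact (Denumerable.eqv (Set.Ioo (0:ℚ) 1)).symm.injective this
  · intro x hx
    exact ⟨(Denumerable.eqv (Set.Ioo (0:ℚ) 1)) ⟨x, hx⟩, by simp⟩

end Enum
section UrysohnMono

variable {C : Type*} [TopologicalSpace C] [CompactSpace C] [T2Space C]

/-- Invariant for the partial families in the recursive construction. -/
def GoodFam (r : Set (C × C)) (P Q : Set C) (q : ℕ → ℚ) (n : ℕ) (f : ℕ → Set C) : Prop :=
  ∀ i, i < n → IsClosed (f i) ∧ IsDownSet r (f i) ∧ Q ⊆ interior (f i) ∧ (f i ∩ P = ∅) ∧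
    ∀ j, j < n → q j < q i → f j ⊆ interior (f i)

theorem goodFam_step {r : Set (C × C)} (hrc : IsClosed r) (hrt : RelTrans r)
    (hrr : ∀ x : C, (x, x) ∈ r) {P Q : Set C} (hPc : IsClosed P) (hPu : IsUpSet r P)
    (hQc : IsClosed Q) (hQd : IsDownSet r Q) (hdisj : Q ∩ P = ∅)
    {q : ℕ → ℚ} (hqinj : Function.Injective q)
    (n : ℕ) (f : ℕ → Set C) (hf : GoodFam r P Q q n f) :
    ∃ m : Set C, IsClosed m ∧ IsDownSet r m ∧ Q ⊆ interior m ∧ (m ∩ P = ∅) ∧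
      (∀ i, i < n → q i < q n → f i ⊆ interior m) ∧
      (∀ i, i < n → q n < q i → m ⊆ interior (f i)) := by
  classical
  set Lower := (Finset.range n).filter (fun i => q i < q n) with hLower
  set Upper := (Finset.range n).filter (fun i => q n < q i) with hUpper
  have hex : ∃ c u : Set C, IsClosed c ∧ IsDownSet r c ∧ Q ⊆ c ∧
      (∀ i, i < n → q i < q n → f i ⊆ c) ∧ IsOpen u ∧ c ⊆ u ∧ (u ∩ P = ∅) ∧
      (∀ i, i < n → q n < q i → u ⊆ interior (f i)) := by
    by_cases hU : Upper.Nonempty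
    · obtain ⟨b, hbmem, hbmin⟩ := Finset.exists_min_image Upper q hU
      have hbn : b < n := Finset.mem_range.1 (Finset.mem_filter.1 hbmem).1
      have hqb : q n < q b := (Finset.mem_filter.1 hbmem).2
      have hbprops := hf b hbn
      have hupp : ∀ i, i < n → q n < q i → interior (f b) ⊆ interior (f i) := by
        intro i hi hqi
        have himem : i ∈ Upper := Finset.mem_filter.2 ⟨Finset.mem_range.2 hi, hqi⟩
        rcases eq_or_ne i b with rfl | hne
        · exact Set.Subset.rfl
        · have : q b < q i := lt_of_le_of_ne (hbmin i himem) (fun h => hne (hqinj h.symm))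
          calc interior (f b) ⊆ f b := interior_subset
            _ ⊆ interior (f i) := (hf i hi).2.2.2.2 b hbn this
      have huP : interior (f b) ∩ P = ∅ := by
        apply Set.eq_empty_of_subset_empty
        calc interior (f b) ∩ P ⊆ f b ∩ P := Set.inter_subset_inter_left _ interior_subset
          _ = ∅ := hbprops.2.2.2.1
      by_cases hL : Lower.Nonempty
      · obtain ⟨a, hamem, hamax⟩ := Finset.exists_max_image Lower q hL
        have han : a < n := Finset.mem_range.1 (Finset.mem_filter.1 hamem).1
        have hqa : q a < q n := (Finset.mem_filter.1 hamem).2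
        have haprops := hf a han
        refine ⟨f a, interior (f b), haprops.1, haprops.2.1, ?_, ?_, isOpen_interior, ?_, huP, hupp⟩
        · exact (haprops.2.2.1).trans interior_subset
        · intro i hi hqi
          have himem : i ∈ Lower := Finset.mem_filter.2 ⟨Finset.mem_range.2 hi, hqi⟩
          rcases eq_or_ne i a with rfl | hne
          · exact Set.Subset.rfl
          · have : q i < q a := lt_of_le_of_ne (hamax i himem) (fun h => hne (hqinj h))
            exact (haprops.2.2.2.2 i hi this).trans interior_subset
        · exact hbprops.2.2.2.2 a han (hqa.trans hqb)
      · refine ⟨Q, interior (f b), hQc, hQd, Set.Subset.rfl, ?_, isOpen_interior, ?_, huP, hupp⟩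
        · intro i hi hqi
          exact absurd ⟨i, Finset.mem_filter.2 ⟨Finset.mem_range.2 hi, hqi⟩⟩ hL
        · exact hbprops.2.2.1
    · have huP' : Pᶜ ∩ P = ∅ := by
        apply Set.eq_empty_of_subset_empty
        rintro y ⟨hy1, hy2⟩
        exact hy1 hy2
      have hupp : ∀ i, i < n → q n < q i → (Pᶜ : Set C) ⊆ interior (f i) := by
        intro i hi hqi
        exact absurd ⟨i, Finset.mem_filter.2 ⟨Finset.mem_range.2 hi, hqi⟩⟩ hU
      by_cases hL : Lower.Nonempty
      · obtain ⟨a, hamem, hamax⟩ := Finset.exists_max_image Lower q hL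
        have han : a < n := Finset.mem_range.1 (Finset.mem_filter.1 hamem).1
        have haprops := hf a han
        refine ⟨f a, Pᶜ, haprops.1, haprops.2.1, ?_, ?_, hPc.isOpen_compl, ?_, huP', hupp⟩
        · exact (haprops.2.2.1).trans interior_subset
        · intro i hi hqi
          have himem : i ∈ Lower := Finset.mem_filter.2 ⟨Finset.mem_range.2 hi, hqi⟩
          rcases eq_or_ne i a with rfl | hne
          · exact Set.Subset.rfl
          · have : q i < q a := lt_of_le_of_ne (hamax i himem) (fun h => hne (hqinj h))
            exact ((hf a han).2.2.2.2 i hi this).trans interior_subset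
        · intro y hy hyP
          have : y ∈ f a ∩ P := ⟨hy, hyP⟩
          rw [haprops.2.2.2.1] at this
          exact this
      · refine ⟨Q, Pᶜ, hQc, hQd, Set.Subset.rfl, ?_, hPc.isOpen_compl, ?_, huP', hupp⟩
        · intro i hi hqi
          exact absurd ⟨i, Finset.mem_filter.2 ⟨Finset.mem_range.2 hi, hqi⟩⟩ hL
        · intro y hy hyP
          have : y ∈ Q ∩ P := ⟨hy, hyP⟩
          rw [hdisj] at this
          exact this
  obtain ⟨c, u, hcc, hcd, hQsubc, hcbig, huo, hcu, huP, husmall⟩ := hex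
  obtain ⟨m, hmc, hmd, hcim, hmu⟩ := interp_down hrc hrt hrr hcd hcc huo hcu
  refine ⟨m, hmc, hmd, hQsubc.trans hcim, ?_, ?_, ?_⟩
  · apply Set.eq_empty_of_subset_empty
    rintro y ⟨hym, hyP⟩
    have : y ∈ u ∩ P := ⟨hmu hym, hyP⟩
    rw [huP] at this
    exact this
  · intro i hi hqi
    exact (hcbig i hi hqi).trans hcim
  · intro i hi hqi
    exact hmu.trans (husmall i hi hqi)

end UrysohnMono
section UrysohnMono2

variable {C : Type*} [TopologicalSpace C] [CompactSpace C] [T2Space C]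

theorem goodFam_update {r : Set (C × C)} {P Q : Set C} {q : ℕ → ℚ}
    (hqinj : Function.Injective q) (n : ℕ) (f : ℕ → Set C) (hf : GoodFam r P Q q n f)
    (m : Set C)
    (hm : IsClosed m ∧ IsDownSet r m ∧ Q ⊆ interior m ∧ (m ∩ P = ∅) ∧
      (∀ i, i < n → q i < q n → f i ⊆ interior m) ∧
      (∀ i, i < n → q n < q i → m ⊆ interior (f i))) :
    GoodFam r P Q q (n + 1) (Function.update f n m) := by
  intro i hi
  rcases eq_or_ne i n with rfl | hne
  · rw [Function.update_self]
    refine ⟨hm.1, hm.2.1, hm.2.2.1, hm.2.2.2.1, ?_⟩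
    intro j hj hqj
    have hjn : j ≠ i := fun h => by rw [h] at hqj; exact absurd hqj (lt_irrefl _)
    rw [Function.update_of_ne hjn]
    exact hm.2.2.2.2.1 j (by omega) hqj
  · have hin : i < n := by omega
    rw [Function.update_of_ne hne]
    have hold := hf i hin
    refine ⟨hold.1, hold.2.1, hold.2.2.1, hold.2.2.2.1, ?_⟩
    intro j hj hqj
    rcases eq_or_ne j n with rfl | hjne
    · rw [Function.update_self]
      exact hm.2.2.2.2.2 i hin hqj
    · rw [Function.update_of_ne hjne]
      exact hold.2.2.2.2 j (by omega) hqj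

noncomputable def famAux (r : Set (C × C)) (hrc : IsClosed r) (hrt : RelTrans r)
    (hrr : ∀ x : C, (x, x) ∈ r) (P Q : Set C) (hPc : IsClosed P) (hPu : IsUpSet r P)
    (hQc : IsClosed Q) (hQd : IsDownSet r Q) (hdisj : Q ∩ P = ∅)
    (q : ℕ → ℚ) (hqinj : Function.Injective q) :
    ∀ n : ℕ, {f : ℕ → Set C // GoodFam r P Q q n f}
  | 0 => ⟨fun _ => (∅ : Set C), fun i hi => absurd hi (Nat.not_lt_zero i)⟩
  | (n + 1) =>
    ⟨Function.update (famAux r hrc hrt hrr P Q hPc hPu hQc hQd hdisj q hqinj n).1 n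
      (Classical.choose (goodFam_step hrc hrt hrr hPc hPu hQc hQd hdisj hqinj n
        (famAux r hrc hrt hrr P Q hPc hPu hQc hQd hdisj q hqinj n).1
        (famAux r hrc hrt hrr P Q hPc hPu hQc hQd hdisj q hqinj n).2)),
      goodFam_update hqinj n _ (famAux r hrc hrt hrr P Q hPc hPu hQc hQd hdisj q hqinj n).2 _
        (Classical.choose_spec (goodFam_step hrc hrt hrr hPc hPu hQc hQd hdisj hqinj n
          (famAux r hrc hrt hrr P Q hPc hPu hQc hQd hdisj q hqinj n).1
          (famAux r hrc hrt hrr P Q hPc hPu hQc hQd hdisj q hqinj n).2))⟩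

theorem famAux_consistent (r : Set (C × C)) (hrc : IsClosed r) (hrt : RelTrans r)
    (hrr : ∀ x : C, (x, x) ∈ r) (P Q : Set C) (hPc : IsClosed P) (hPu : IsUpSet r P)
    (hQc : IsClosed Q) (hQd : IsDownSet r Q) (hdisj : Q ∩ P = ∅)
    (q : ℕ → ℚ) (hqinj : Function.Injective q) :
    ∀ N n : ℕ, n < N →
    (famAux r hrc hrt hrr P Q hPc hPu hQc hQd hdisj q hqinj N).1 n =
    (famAux r hrc hrt hrr P Q hPc hPu hQc hQd hdisj q hqinj (n + 1)).1 n := by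
  intro N
  induction N with
  | zero => intro n hn; exact absurd hn (Nat.not_lt_zero n)
  | succ N ih =>
    intro n hn
    rcases eq_or_ne n N with rfl | hne
    · rfl
    · have hnN : n < N := by omega
      have hupd : (famAux r hrc hrt hrr P Q hPc hPu hQc hQd hdisj q hqinj (N + 1)).1 n =
          (famAux r hrc hrt hrr P Q hPc hPu hQc hQd hdisj q hqinj N).1 n := by
        show (Function.update (famAux r hrc hrt hrr P Q hPc hPu hQc hQd hdisj q hqinj N).1 N _) n
          = _
        rw [Function.update_of_ne hne]
      rw [hupd]
      exact ih n hnN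

theorem exists_good_family {r : Set (C × C)} (hrc : IsClosed r) (hrt : RelTrans r)
    (hrr : ∀ x : C, (x, x) ∈ r) {P Q : Set C} (hPc : IsClosed P) (hPu : IsUpSet r P)
    (hQc : IsClosed Q) (hQd : IsDownSet r Q) (hdisj : Q ∩ P = ∅)
    {q : ℕ → ℚ} (hqinj : Function.Injective q) :
    ∃ mm : ℕ → Set C, ∀ n : ℕ, IsClosed (mm n) ∧ IsDownSet r (mm n) ∧ Q ⊆ interior (mm n) ∧
      (mm n ∩ P = ∅) ∧ ∀ j : ℕ, q j < q n → mm j ⊆ interior (mm n) := by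
  refine ⟨fun n => (famAux r hrc hrt hrr P Q hPc hPu hQc hQd hdisj q hqinj (n + 1)).1 n,
    fun n => ?_⟩
  have h1 := (famAux r hrc hrt hrr P Q hPc hPu hQc hQd hdisj q hqinj (n + 1)).2 n
    (Nat.lt_succ_self n)
  refine ⟨h1.1, h1.2.1, h1.2.2.1, h1.2.2.2.1, ?_⟩
  intro j hqj
  have hN : n < max j n + 1 := by omega
  have hjN : j < max j n + 1 := by omega
  have h2 := (famAux r hrc hrt hrr P Q hPc hPu hQc hQd hdisj q hqinj (max j n + 1)).2 n hN
  have hc1 := famAux_consistent r hrc hrt hrr P Q hPc hPu hQc hQd hdisj q hqinj (max j n + 1) n hN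
  have hc2 := famAux_consistent r hrc hrt hrr P Q hPc hPu hQc hQd hdisj q hqinj (max j n + 1) j hjN
  have := h2.2.2.2.2 j hjN hqj
  rw [hc1, hc2] at this
  exact this

end UrysohnMono2
section UrysohnMono3

variable {C : Type*} [TopologicalSpace C] [CompactSpace C] [T2Space C]

/-- Monotone Urysohn lemma on a compact Hausdorff space with a closed preorder. -/
theorem mono_urysohn {r : Set (C × C)} (hrc : IsClosed r) (hrt : RelTrans r)
    (hrr : ∀ x : C, (x, x) ∈ r) {P Q : Set C} (hPc : IsClosed P) (hPu : IsUpSet r P)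
    (hQc : IsClosed Q) (hQd : IsDownSet r Q) (hdisj : Q ∩ P = ∅) :
    ∃ u : C → ℝ, Continuous u ∧ (∀ x, u x ∈ Set.Icc (0:ℝ) 1) ∧
      (∀ x y : C, (x, y) ∈ r → u x ≤ u y) ∧ (∀ x ∈ P, u x = 1) ∧ (∀ x ∈ Q, u x = 0) := by
  classical
  obtain ⟨q, hqmem, hqinj, hqsurj⟩ := exists_rat_enum
  obtain ⟨mm, hmm⟩ := exists_good_family hrc hrt hrr hPc hPu hQc hQd hdisj hqinj
  -- the nested family
  have hq0 : ∀ n, (0:ℚ) < q n := fun n => (hqmem n).1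
  have hq1 : ∀ n, q n < 1 := fun n => (hqmem n).2
  set S : C → Set ℝ := fun x => insert (0:ℝ) ((fun n => (q n : ℝ)) '' {n | x ∉ mm n}) with hS
  have hSne : ∀ x, (S x).Nonempty := fun x => ⟨0, Set.mem_insert _ _⟩
  have hSbdd : ∀ x, BddAbove (S x) := by
    intro x
    refine ⟨1, ?_⟩
    rintro t (rfl | ⟨n, -, rfl⟩)
    · exact zero_le_one
    · show ((q n : ℝ)) ≤ 1
      exact_mod_cast (hq1 n).le
  set u : C → ℝ := fun x => sSup (S x) with hu
  have hu0 : ∀ x, 0 ≤ u x := fun x => le_csSup (hSbdd x) (Set.mem_insert _ _)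
  have hu1 : ∀ x, u x ≤ 1 := by
    intro x
    apply csSup_le (hSne x)
    rintro t (rfl | ⟨n, -, rfl⟩)
    · exact zero_le_one
    · show ((q n : ℝ)) ≤ 1
      exact_mod_cast (hq1 n).le
  have huq : ∀ x n, x ∉ mm n → (q n : ℝ) ≤ u x := by
    intro x n hx
    exact le_csSup (hSbdd x) (Set.mem_insert_iff.2 (Or.inr ⟨n, hx, rfl⟩))
  -- if x ∈ mm j then u x ≤ q j
  have hule : ∀ x j, x ∈ mm j → u x ≤ (q j : ℝ) := by
    intro x j hx
    apply csSup_le (hSne x)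
    rintro t (rfl | ⟨n, hn, rfl⟩)
    · exact_mod_cast (hq0 j).le
    · -- x ∉ mm n; if q j < q n then mm j ⊆ interior (mm n) ⊆ mm n contradicting x ∈ mm j
      by_contra hlt
      push_neg at hlt
      have : q j < q n := by exact_mod_cast hlt
      exact hn (interior_subset ((hmm n).2.2.2.2 j this hx))
  refine ⟨u, ?_, fun x => ⟨hu0 x, hu1 x⟩, ?_, ?_, ?_⟩
  · -- continuity
    rw [continuous_iff_continuousAt]
    intro x
    rw [ContinuousAt]
    apply tendsto_order.2
    constructor
    · -- lower semicontinuity: a < u x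
      intro a ha
      rcases lt_or_ge a 0 with ha0 | ha0
      · exact Filter.Eventually.of_forall fun y => lt_of_lt_of_le ha0 (hu0 y)
      · -- 0 ≤ a < u x : find n with x ∉ mm n and a < q n
        have : ∃ t ∈ S x, a < t := exists_lt_of_lt_csSup (hSne x) ha
        rcases this with ⟨t, ht, hat⟩
        rcases ht with rfl | ⟨n, hn, rfl⟩
        · exact absurd hat (not_lt.2 ha0)
        · -- pick rational between a and q n
          rcases exists_rat_btwn hat with ⟨z, haz, hzq⟩
          have hz0 : (0:ℚ) < z := by
            have : (0:ℝ) ≤ a := ha0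
            exact_mod_cast lt_of_le_of_lt this haz
          have hz1 : z < 1 := by
            have h1 : (z:ℝ) < ((q n : ℝ)) := hzq
            have h2 : z < q n := by exact_mod_cast h1
            exact h2.trans (hq1 n)
          obtain ⟨j, hj⟩ := hqsurj z ⟨hz0, hz1⟩
          have hqjn : q j < q n := by
            rw [hj]
            have h1 : (z:ℝ) < ((q n : ℝ)) := hzq
            exact_mod_cast h1
          have hxj : x ∉ mm j := by
            intro hxj
            exact hn (interior_subset ((hmm n).2.2.2.2 j hqjn hxj))
          have hopen : IsOpen (mm j)ᶜ := (hmm j).1.isOpen_compl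
          refine Filter.eventually_iff_exists_mem.2 ⟨(mm j)ᶜ, hopen.mem_nhds hxj, ?_⟩
          intro y hy
          have := huq y j hy
          have haqj : a < (q j : ℝ) := by rw [hj]; exact_mod_cast haz
          linarith
    · -- upper semicontinuity: u x < a
      intro a ha
      rcases le_or_gt a 1 with ha1 | ha1
      · -- 0 ≤ u x < a ≤ 1
        rcases exists_rat_btwn ha with ⟨z, hxz, hza⟩
        rcases exists_rat_btwn hza with ⟨z', hzz', hz'a⟩
        have hz0 : (0:ℚ) < z := by
          have : (0:ℝ) ≤ u x := hu0 x
          exact_mod_cast lt_of_le_of_lt this hxz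
        have hz'0 : (0:ℚ) < z' := by
          have : (z:ℝ) < z' := by exact_mod_cast hzz'
          exact_mod_cast lt_trans (by exact_mod_cast hz0 : (0:ℝ) < (z:ℝ)) this
        have hz1 : z < 1 := by
          have h1 : (z:ℝ) < z' := by exact_mod_cast hzz'
          have h2 : (z':ℝ) < a := hz'a
          have : (z:ℝ) < 1 := lt_trans h1 (lt_of_lt_of_le h2 ha1)
          exact_mod_cast this
        have hz'1 : z' < 1 := by
          have h2 : (z':ℝ) < a := hz'a
          have : (z':ℝ) < 1 := lt_of_lt_of_le h2 ha1
          exact_mod_cast this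
        obtain ⟨j, hj⟩ := hqsurj z ⟨hz0, hz1⟩
        obtain ⟨j', hj'⟩ := hqsurj z' ⟨hz'0, hz'1⟩
        have hqjj' : q j < q j' := by rw [hj, hj']; exact_mod_cast hzz'
        have hxmmj : x ∈ mm j := by
          by_contra hxj
          have := huq x j hxj
          rw [hj] at this
          exact absurd hxz (not_lt.2 this)
        have hxint : x ∈ interior (mm j') := (hmm j').2.2.2.2 j hqjj' hxmmj
        refine Filter.eventually_iff_exists_mem.2 ⟨interior (mm j'), isOpen_interior.mem_nhds hxint, ?_⟩
        intro y hy
        have : u y ≤ (q j' : ℝ) := hule y j' (interior_subset hy)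
        rw [hj'] at this
        linarith
      · exact Filter.Eventually.of_forall fun y => lt_of_le_of_lt (hu1 y) ha1
  · -- monotone
    intro x y hxy
    apply csSup_le (hSne x)
    rintro t (rfl | ⟨n, hn, rfl⟩)
    · exact hu0 y
    · apply huq y n
      intro hy
      exact hn ((hmm n).2.1 hxy hy)
  · -- u = 1 on P
    intro x hx
    apply le_antisymm (hu1 x)
    by_contra hlt
    push_neg at hlt
    rcases exists_rat_btwn hlt with ⟨z, hxz, hz1⟩
    have hz0 : (0:ℚ) < z := by
      have : (0:ℝ) ≤ u x := hu0 x
      exact_mod_cast lt_of_le_of_lt this hxz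
    have hz1' : z < 1 := by exact_mod_cast hz1
    obtain ⟨j, hj⟩ := hqsurj z ⟨hz0, hz1'⟩
    have hxj : x ∉ mm j := by
      intro hxj
      have : x ∈ mm j ∩ P := ⟨hxj, hx⟩
      rw [(hmm j).2.2.2.1] at this
      exact this
    have := huq x j hxj
    rw [hj] at this
    exact absurd hxz (not_lt.2 this)
  · -- u = 0 on Q
    intro x hx
    apply le_antisymm _ (hu0 x)
    apply csSup_le (hSne x)
    rintro t (rfl | ⟨n, hn, rfl⟩)
    · exact le_refl 0
    · exact absurd (interior_subset ((hmm n).2.2.1 hx)) hn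

end UrysohnMono3
section ApproxMono

variable {C : Type*} [TopologicalSpace C] [CompactSpace C] [T2Space C]

theorem approx_mono {r : Set (C × C)} (hrc : IsClosed r) (hrt : RelTrans r)
    (hrr : ∀ x : C, (x, x) ∈ r) {EA DD S : Set C} (hEAc : IsClosed EA) (hEAu : IsUpSet r EA)
    (hDDc : IsClosed DD) (hDDd : IsDownSet r DD) (hSc : IsClosed S) (hdisjED : EA ∩ DD = ∅)
    (g : C → ℝ) (hgc : Continuous g) (hg0 : ∀ x, 0 ≤ g x) (hg1 : ∀ x, g x ≤ 1)
    (hgmono : ∀ x y : C, x ∈ S → y ∈ S → (x, y) ∈ r → g x ≤ g y)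
    (hgE : ∀ x, x ∈ EA → x ∈ S → g x = 1) (hgD : ∀ x, x ∈ DD → x ∈ S → g x = 0)
    (N : ℕ) (hN : 0 < N) :
    ∃ G : C → ℝ, Continuous G ∧ (∀ x, G x ∈ Set.Icc (0:ℝ) 1) ∧
      (∀ x y : C, (x, y) ∈ r → G x ≤ G y) ∧ (∀ x ∈ EA, G x = 1) ∧ (∀ x ∈ DD, G x = 0) ∧
      (∀ x ∈ S, |G x - g x| ≤ 1 / N) := by
  classical
  have hNpos : (0:ℝ) < N := by exact_mod_cast hN
  have hex : ∀ k : ℕ, ∃ u : C → ℝ, Continuous u ∧ (∀ x, u x ∈ Set.Icc (0:ℝ) 1) ∧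
      (∀ x y : C, (x, y) ∈ r → u x ≤ u y) ∧ (1 ≤ k → k ≤ N →
        ((∀ x ∈ EA, u x = 1) ∧ (∀ x ∈ DD, u x = 0) ∧
         (∀ s, s ∈ S → (k:ℝ)/N ≤ g s → u s = 1) ∧
         (∀ s, s ∈ S → g s ≤ ((k:ℝ)-1)/N → u s = 0))) := by
    intro k
    by_cases hk : 1 ≤ k ∧ k ≤ N
    · obtain ⟨hk1, hkN⟩ := hk
      set Bup : Set C := (S ∩ {x | (k:ℝ)/N ≤ g x}) ∪ EA with hBup
      set Bdn : Set C := (S ∩ {x | g x ≤ ((k:ℝ)-1)/N}) ∪ DD with hBdn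
      have hBupc : IsClosed Bup := (hSc.inter (isClosed_le continuous_const hgc)).union hEAc
      have hBdnc : IsClosed Bdn := (hSc.inter (isClosed_le hgc continuous_const)).union hDDc
      set P' : Set C := {y | ∃ e ∈ Bup, (e, y) ∈ r} with hP'
      set Q' : Set C := {x | ∃ d ∈ Bdn, (x, d) ∈ r} with hQ'
      have hP'c : IsClosed P' := isClosed_upSat hrc hBupc.isCompact
      have hQ'c : IsClosed Q' := isClosed_downSat hrc hBdnc.isCompact
      have hP'u : IsUpSet r P' := by
        rintro x y hxy ⟨e, he, her⟩
        exact ⟨e, he, hrt e x y her hxy⟩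
      have hQ'd : IsDownSet r Q' := by
        rintro x y hxy ⟨d, hd, hyd⟩
        exact ⟨d, hd, hrt x y d hxy hyd⟩
      have hsubP' : Bup ⊆ P' := fun e he => ⟨e, he, hrr e⟩
      have hsubQ' : Bdn ⊆ Q' := fun d hd => ⟨d, hd, hrr d⟩
      have hfrac : ((k:ℝ)-1)/N < (k:ℝ)/N := by
        rw [div_lt_div_iff₀ hNpos hNpos]
        nlinarith
      have hdisj' : Q' ∩ P' = ∅ := by
        apply Set.eq_empty_of_subset_empty
        rintro z ⟨⟨d, hd, hzd⟩, ⟨e, he, hez⟩⟩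
        have hed : (e, d) ∈ r := hrt e z d hez hzd
        rcases he with ⟨heS, hegc⟩ | heE
        · rcases hd with ⟨hdS, hdgc⟩ | hdD
          · have := hgmono e d heS hdS hed
            have hlt : ((k:ℝ)-1)/N < (k:ℝ)/N := hfrac
            simp only [Set.mem_setOf_eq] at hegc hdgc
            linarith
          · have heD : e ∈ DD := hDDd hed hdD
            have : g e = 0 := hgD e heD heS
            simp only [Set.mem_setOf_eq] at hegc
            have hkpos : (0:ℝ) < (k:ℝ)/N := by
              apply div_pos _ hNpos
              exact_mod_cast hk1
            linarith
        · have hdE : d ∈ EA := hEAu hed heE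
          rcases hd with ⟨hdS, hdgc⟩ | hdD
          · have : g d = 1 := hgE d hdE hdS
            simp only [Set.mem_setOf_eq] at hdgc
            have : ((k:ℝ)-1)/N < 1 := by
              rw [div_lt_one hNpos]
              have : (k:ℝ) ≤ N := by exact_mod_cast hkN
              linarith
            linarith
          · have : d ∈ EA ∩ DD := ⟨hdE, hdD⟩
            rw [hdisjED] at this
            exact this
      obtain ⟨u, huc, hu01, humono, huP, huQ⟩ :=
        mono_urysohn hrc hrt hrr hP'c hP'u hQ'c hQ'd hdisj'
      refine ⟨u, huc, hu01, humono, fun _ _ => ⟨?_, ?_, ?_, ?_⟩⟩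
      · exact fun x hx => huP x (hsubP' (Or.inr hx))
      · exact fun x hx => huQ x (hsubQ' (Or.inr hx))
      · exact fun s hs hgs => huP s (hsubP' (Or.inl ⟨hs, hgs⟩))
      · exact fun s hs hgs => huQ s (hsubQ' (Or.inl ⟨hs, hgs⟩))
    · refine ⟨fun _ => 0, continuous_const, fun x => ⟨le_refl 0, zero_le_one⟩,
        fun _ _ _ => le_refl 0, fun h1 h2 => absurd ⟨h1, h2⟩ hk⟩
  choose U hU using hex
  set G : C → ℝ := fun x => (∑ k ∈ Finset.Icc 1 N, U k x) / N with hG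
  have hcard : (Finset.Icc 1 N).card = N := by
    rw [Nat.card_Icc]
    omega
  have hsum_nonneg : ∀ x, 0 ≤ ∑ k ∈ Finset.Icc 1 N, U k x := by
    intro x
    exact Finset.sum_nonneg fun k _ => ((hU k).2.1 x).1
  have hsum_le : ∀ x, (∑ k ∈ Finset.Icc 1 N, U k x) ≤ N := by
    intro x
    calc ∑ k ∈ Finset.Icc 1 N, U k x ≤ ∑ k ∈ Finset.Icc 1 N, 1 :=
          Finset.sum_le_sum fun k _ => ((hU k).2.1 x).2
      _ = N := by rw [Finset.sum_const, hcard, nsmul_eq_mul, mul_one]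
  refine ⟨G, ?_, ?_, ?_, ?_, ?_, ?_⟩
  · exact (continuous_finset_sum _ fun k _ => (hU k).1).div_const _
  · intro x
    constructor
    · exact div_nonneg (hsum_nonneg x) hNpos.le
    · rw [div_le_one hNpos]
      exact hsum_le x
  · intro x y hxy
    have hsum : (∑ k ∈ Finset.Icc 1 N, U k x) ≤ ∑ k ∈ Finset.Icc 1 N, U k y :=
      Finset.sum_le_sum fun k _ => (hU k).2.2.1 x y hxy
    exact (div_le_div_iff_of_pos_right hNpos).2 hsum
  · intro x hx
    have : ∀ k ∈ Finset.Icc 1 N, U k x = 1 := by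
      intro k hkmem
      rw [Finset.mem_Icc] at hkmem
      exact ((hU k).2.2.2 hkmem.1 hkmem.2).1 x hx
    rw [hG]
    simp only
    rw [Finset.sum_congr rfl this, Finset.sum_const, hcard, nsmul_eq_mul, mul_one,
      div_self (ne_of_gt hNpos)]
  · intro x hx
    have : ∀ k ∈ Finset.Icc 1 N, U k x = 0 := by
      intro k hkmem
      rw [Finset.mem_Icc] at hkmem
      exact ((hU k).2.2.2 hkmem.1 hkmem.2).2.1 x hx
    rw [hG]
    simp only
    rw [Finset.sum_congr rfl this, Finset.sum_const, smul_zero, zero_div]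
  · intro s hs
    set c := g s with hc
    have hc0 : 0 ≤ c := hg0 s
    have hc1 : c ≤ 1 := hg1 s
    have hNc0 : (0:ℝ) ≤ (N:ℝ) * c := by positivity
    -- upper bound on the sum
    have hupper : (∑ k ∈ Finset.Icc 1 N, U k s) ≤ (N:ℝ) * c + 1 := by
      set t1 := (Finset.Icc 1 N).filter (fun k : ℕ => ((k:ℝ) < (N:ℝ) * c + 1)) with ht1
      have hzero : ∀ k ∈ Finset.Icc 1 N, k ∉ t1 → U k s = 0 := by
        intro k hkmem hknot
        rw [Finset.mem_Icc] at hkmem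
        have hkge : ¬ ((k:ℝ) < (N:ℝ) * c + 1) := by
          intro hcon
          exact hknot (Finset.mem_filter.2 ⟨Finset.mem_Icc.2 hkmem, hcon⟩)
        push_neg at hkge
        apply ((hU k).2.2.2 hkmem.1 hkmem.2).2.2.2 s hs
        rw [le_div_iff₀ hNpos, mul_comm]
        linarith
      have hsplit : (∑ k ∈ Finset.Icc 1 N, U k s) = ∑ k ∈ t1, U k s := by
        apply (Finset.sum_subset (Finset.filter_subset _ _) ?_).symm
        intro k hk1 hk2
        exact hzero k hk1 hk2
      rw [hsplit]
      have hcard1 : (t1.card : ℝ) ≤ (N:ℝ) * c + 1 := by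
        have hsub : t1 ⊆ Finset.Icc 1 (Nat.floor ((N:ℝ)*c) + 1) := by
          intro k hk
          rw [Finset.mem_filter, Finset.mem_Icc] at hk
          rw [Finset.mem_Icc]
          refine ⟨hk.1.1, ?_⟩
          have h1 : (k:ℝ) < (N:ℝ)*c + 1 := hk.2
          have h2 : (N:ℝ)*c < (Nat.floor ((N:ℝ)*c) : ℝ) + 1 := Nat.lt_floor_add_one _
          have : (k:ℝ) < ((Nat.floor ((N:ℝ)*c) + 1 : ℕ) : ℝ) + 1 := by
            push_cast
            linarith
          have hk2 : k < Nat.floor ((N:ℝ)*c) + 1 + 1 := by exact_mod_cast this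
          omega
        have := Finset.card_le_card hsub
        have hcard2 : (Finset.Icc 1 (Nat.floor ((N:ℝ)*c) + 1)).card = Nat.floor ((N:ℝ)*c) + 1 := by
          rw [Nat.card_Icc]
          omega
        rw [hcard2] at this
        have hfl : ((Nat.floor ((N:ℝ)*c) : ℕ) : ℝ) ≤ (N:ℝ)*c := Nat.floor_le hNc0
        have : (t1.card : ℝ) ≤ ((Nat.floor ((N:ℝ)*c) + 1 : ℕ) : ℝ) := by exact_mod_cast this
        push_cast at this
        linarith
      calc ∑ k ∈ t1, U k s ≤ ∑ k ∈ t1, 1 := Finset.sum_le_sum fun k _ => ((hU k).2.1 s).2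
        _ = t1.card := by rw [Finset.sum_const, nsmul_eq_mul, mul_one]
        _ ≤ (N:ℝ) * c + 1 := hcard1
    -- lower bound on the sum
    have hlower : (N:ℝ) * c - 1 ≤ ∑ k ∈ Finset.Icc 1 N, U k s := by
      set t0 := (Finset.Icc 1 N).filter (fun k : ℕ => ((k:ℝ) ≤ (N:ℝ) * c)) with ht0
      have hone : ∀ k ∈ t0, U k s = 1 := by
        intro k hk
        rw [Finset.mem_filter, Finset.mem_Icc] at hk
        apply ((hU k).2.2.2 hk.1.1 hk.1.2).2.2.1 s hs
        rw [div_le_iff₀ hNpos, mul_comm]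
        exact hk.2
      have hsum0 : (t0.card : ℝ) = ∑ k ∈ t0, U k s := by
        rw [Finset.sum_congr rfl hone, Finset.sum_const, nsmul_eq_mul, mul_one]
      have hstep : (∑ k ∈ t0, U k s) ≤ ∑ k ∈ Finset.Icc 1 N, U k s := by
        apply Finset.sum_le_sum_of_subset_of_nonneg (Finset.filter_subset _ _)
        intro k hk _
        exact ((hU k).2.1 s).1
      have hfloorN : Nat.floor ((N:ℝ)*c) ≤ N := by
        have : (N:ℝ)*c ≤ (N:ℝ) := by nlinarith
        calc Nat.floor ((N:ℝ)*c) ≤ Nat.floor ((N:ℝ)) := Nat.floor_mono this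
          _ = N := Nat.floor_natCast N
      have hsub0 : Finset.Icc 1 (Nat.floor ((N:ℝ)*c)) ⊆ t0 := by
        intro k hk
        rw [Finset.mem_Icc] at hk
        rw [Finset.mem_filter, Finset.mem_Icc]
        refine ⟨⟨hk.1, hk.2.trans hfloorN⟩, ?_⟩
        exact (Nat.le_floor_iff hNc0).1 hk.2
      have hcard0 : Nat.floor ((N:ℝ)*c) ≤ t0.card := by
        have := Finset.card_le_card hsub0
        rw [Nat.card_Icc] at this
        omega
      have hge : (N:ℝ)*c - 1 ≤ (t0.card : ℝ) := by
        have h2 : (N:ℝ)*c < (Nat.floor ((N:ℝ)*c) : ℝ) + 1 := Nat.lt_floor_add_one _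
        have h3 : ((Nat.floor ((N:ℝ)*c)):ℝ) ≤ (t0.card : ℝ) := by exact_mod_cast hcard0
        linarith
      calc (N:ℝ)*c - 1 ≤ (t0.card : ℝ) := hge
        _ = ∑ k ∈ t0, U k s := hsum0
        _ ≤ ∑ k ∈ Finset.Icc 1 N, U k s := hstep
    have h1 : (∑ k ∈ Finset.Icc 1 N, U k s)/N ≤ ((N:ℝ)*c + 1)/N :=
      (div_le_div_iff_of_pos_right hNpos).2 hupper
    have h2 : ((N:ℝ)*c - 1)/N ≤ (∑ k ∈ Finset.Icc 1 N, U k s)/N :=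
      (div_le_div_iff_of_pos_right hNpos).2 hlower
    have h3 : ((N:ℝ)*c + 1)/N = c + 1/N := by
      field_simp
    have h4 : ((N:ℝ)*c - 1)/N = c - 1/N := by
      field_simp
    rw [h3] at h1
    rw [h4] at h2
    rw [hG]
    simp only
    rw [abs_le]
    constructor
    · linarith
    · linarith

end ApproxMono
section Global

variable {X : Type*} [TopologicalSpace X] [LocallyCompactSpace X] [SigmaCompactSpace X]
  [T2Space X]

/-- Properties of an approximate separating function at stage `n`. -/
def SepProps (ρ : Set (X × X)) (E D Kn : Set X) (f : X → ℝ) : Prop :=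
  Continuous f ∧ (∀ x, f x ∈ Set.Icc (0:ℝ) 1) ∧
    (∀ x y : X, x ∈ Kn → y ∈ Kn → (x, y) ∈ ρ → f x ≤ f y) ∧
    (∀ x, x ∈ E → x ∈ Kn → f x = 1) ∧ (∀ x, x ∈ D → x ∈ Kn → f x = 0)

theorem sep_step (ρ : Set (X × X)) (hρc : IsClosed ρ) (hρt : RelTrans ρ)
    (hρr : ∀ x : X, (x, x) ∈ ρ) (E D : Set X) (hEc : IsClosed E) (hDc : IsClosed D)
    (hEup : ∀ x y : X, (x, y) ∈ ρ → x ∈ E → y ∈ E)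
    (hDdown : ∀ x y : X, (x, y) ∈ ρ → y ∈ D → x ∈ D) (hdisj : E ∩ D = ∅)
    (Km : Set X) (hKm : IsCompact Km) (CS : Set X) (hCS : IsClosed CS)
    (f : X → ℝ) (hf : Continuous f) (hf01 : ∀ x, f x ∈ Set.Icc (0:ℝ) 1)
    (hfmono : ∀ x y : X, x ∈ CS → y ∈ CS → (x, y) ∈ ρ → f x ≤ f y)
    (hfE : ∀ x, x ∈ E → x ∈ CS → f x = 1) (hfD : ∀ x, x ∈ D → x ∈ CS → f x = 0)
    (N : ℕ) (hN : 0 < N) :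
    ∃ g : X → ℝ, SepProps ρ E D Km g ∧ ∀ x, x ∈ CS → x ∈ Km → |g x - f x| ≤ 1 / N := by
  classical
  haveI hCsp : CompactSpace Km := isCompact_iff_compactSpace.1 hKm
  set CC := Km
  -- transfer the data to the compact subtype
  set r : Set (CC × CC) :=
    (fun p : CC × CC => ((p.1 : X), (p.2 : X))) ⁻¹' ρ with hrdef
  have hprodcont : Continuous fun p : CC × CC => ((p.1 : X), (p.2 : X)) :=
    (continuous_subtype_val.comp continuous_fst).prodMk
      (continuous_subtype_val.comp continuous_snd)
  have hrc : IsClosed r := hρc.preimage hprodcont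
  have hrt : RelTrans r := by
    intro a b c hab hbc
    exact hρt _ _ _ hab hbc
  have hrr : ∀ a : CC, (a, a) ∈ r := fun a => hρr (a : X)
  set EA : Set CC := Subtype.val ⁻¹' E with hEA
  set DD : Set CC := Subtype.val ⁻¹' D with hDD
  set S : Set CC := Subtype.val ⁻¹' CS with hSS
  have hEAc : IsClosed EA := hEc.preimage continuous_subtype_val
  have hDDc : IsClosed DD := hDc.preimage continuous_subtype_val
  have hSc : IsClosed S := hCS.preimage continuous_subtype_val
  have hEAu : IsUpSet r EA := fun a b hab ha => hEup _ _ hab ha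
  have hDDd : IsDownSet r DD := fun a b hab hb => hDdown _ _ hab hb
  have hdisjED : EA ∩ DD = ∅ := by
    apply Set.eq_empty_of_subset_empty
    rintro a ⟨ha1, ha2⟩
    have : (a : X) ∈ E ∩ D := ⟨ha1, ha2⟩
    rw [hdisj] at this
    exact this
  obtain ⟨G, hGc, hG01, hGmono, hGE, hGD, hGapprox⟩ :=
    approx_mono hrc hrt hrr hEAc hEAu hDDc hDDd hSc hdisjED (fun a : CC => f (a : X))
      (hf.comp continuous_subtype_val) (fun a => (hf01 _).1) (fun a => (hf01 _).2)
      (fun a b ha hb hab => hfmono _ _ ha hb hab)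
      (fun a ha haS => hfE _ ha haS) (fun a ha haS => hfD _ ha haS) N hN
  -- Tietze extension of G
  have hKmclosed : IsClosed Km := hKm.isClosed
  obtain ⟨g₀, hg₀⟩ := ContinuousMap.exists_restrict_eq hKmclosed (ContinuousMap.mk G hGc)
  have hg₀val : ∀ (x : X) (hx : x ∈ Km), g₀ x = G ⟨x, hx⟩ := by
    intro x hx
    have := congrFun (congrArg DFunLike.coe hg₀) ⟨x, hx⟩
    simpa using this
  set g : X → ℝ := fun x => max 0 (min 1 (g₀ x)) with hgdef
  have hgval : ∀ (x : X) (hx : x ∈ Km), g x = G ⟨x, hx⟩ := by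
    intro x hx
    rw [hgdef]
    simp only
    rw [hg₀val x hx, min_eq_right (hG01 ⟨x, hx⟩).2, max_eq_right (hG01 ⟨x, hx⟩).1]
  refine ⟨g, ⟨?_, ?_, ?_, ?_, ?_⟩, ?_⟩
  · exact continuous_const.max (continuous_const.min g₀.continuous)
  · intro x
    constructor
    · exact le_max_left 0 _
    · rw [hgdef]
      simp only
      rw [max_le_iff]
      exact ⟨zero_le_one, min_le_left 1 _⟩
  · intro x y hx hy hxy
    rw [hgval x hx, hgval y hy]
    exact hGmono ⟨x, hx⟩ ⟨y, hy⟩ hxy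
  · intro x hxE hxK
    rw [hgval x hxK]
    exact hGE ⟨x, hxK⟩ hxE
  · intro x hxD hxK
    rw [hgval x hxK]
    exact hGD ⟨x, hxK⟩ hxD
  · intro x hxCS hxK
    rw [hgval x hxK]
    exact hGapprox ⟨x, hxK⟩ hxCS

/-- The recursively constructed sequence of approximate separating functions. -/
noncomputable def sepFam (ρ : Set (X × X)) (hρc : IsClosed ρ) (hρt : RelTrans ρ)
    (hρr : ∀ x : X, (x, x) ∈ ρ) (E D : Set X) (hEc : IsClosed E) (hDc : IsClosed D)
    (hEup : ∀ x y : X, (x, y) ∈ ρ → x ∈ E → y ∈ E)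
    (hDdown : ∀ x y : X, (x, y) ∈ ρ → y ∈ D → x ∈ D) (hdisj : E ∩ D = ∅)
    (K : CompactExhaustion X) :
    ∀ n : ℕ, {f : X → ℝ // SepProps ρ E D (K n) f}
  | 0 =>
    ⟨Classical.choose (sep_step ρ hρc hρt hρr E D hEc hDc hEup hDdown hdisj (K 0)
        (K.isCompact 0) ∅ isClosed_empty (fun _ => 0) continuous_const
        (fun x => ⟨le_refl 0, zero_le_one⟩) (fun x y hx => absurd hx (Set.notMem_empty x))
        (fun x _ hx => absurd hx (Set.notMem_empty x))
        (fun x _ hx => absurd hx (Set.notMem_empty x)) 1 Nat.one_pos),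
      (Classical.choose_spec (sep_step ρ hρc hρt hρr E D hEc hDc hEup hDdown hdisj (K 0)
        (K.isCompact 0) ∅ isClosed_empty (fun _ => 0) continuous_const
        (fun x => ⟨le_refl 0, zero_le_one⟩) (fun x y hx => absurd hx (Set.notMem_empty x))
        (fun x _ hx => absurd hx (Set.notMem_empty x))
        (fun x _ hx => absurd hx (Set.notMem_empty x)) 1 Nat.one_pos)).1⟩
  | (n + 1) =>
    let prev := sepFam ρ hρc hρt hρr E D hEc hDc hEup hDdown hdisj K n
    ⟨Classical.choose (sep_step ρ hρc hρt hρr E D hEc hDc hEup hDdown hdisj (K (n+1))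
        (K.isCompact (n+1)) (K n) (K.isCompact n).isClosed prev.1 prev.2.1 prev.2.2.1
        prev.2.2.2.1 prev.2.2.2.2.1 prev.2.2.2.2.2 (2^n) (Nat.pow_pos Nat.zero_lt_two)),
      (Classical.choose_spec (sep_step ρ hρc hρt hρr E D hEc hDc hEup hDdown hdisj (K (n+1))
        (K.isCompact (n+1)) (K n) (K.isCompact n).isClosed prev.1 prev.2.1 prev.2.2.1
        prev.2.2.2.1 prev.2.2.2.2.1 prev.2.2.2.2.2 (2^n)
        (Nat.pow_pos Nat.zero_lt_two))).1⟩

theorem sepFam_close (ρ : Set (X × X)) (hρc : IsClosed ρ) (hρt : RelTrans ρ)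
    (hρr : ∀ x : X, (x, x) ∈ ρ) (E D : Set X) (hEc : IsClosed E) (hDc : IsClosed D)
    (hEup : ∀ x y : X, (x, y) ∈ ρ → x ∈ E → y ∈ E)
    (hDdown : ∀ x y : X, (x, y) ∈ ρ → y ∈ D → x ∈ D) (hdisj : E ∩ D = ∅)
    (K : CompactExhaustion X) (n : ℕ) :
    ∀ x ∈ K n,
      |(sepFam ρ hρc hρt hρr E D hEc hDc hEup hDdown hdisj K (n+1)).1 x -
        (sepFam ρ hρc hρt hρr E D hEc hDc hEup hDdown hdisj K n).1 x| ≤ 1 / ((2^n : ℕ) : ℝ) := by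
  intro x hx
  exact (Classical.choose_spec (sep_step ρ hρc hρt hρr E D hEc hDc hEup hDdown hdisj (K (n+1))
      (K.isCompact (n+1)) (K n) (K.isCompact n).isClosed
      (sepFam ρ hρc hρt hρr E D hEc hDc hEup hDdown hdisj K n).1
      (sepFam ρ hρc hρt hρr E D hEc hDc hEup hDdown hdisj K n).2.1
      (sepFam ρ hρc hρt hρr E D hEc hDc hEup hDdown hdisj K n).2.2.1
      (sepFam ρ hρc hρt hρr E D hEc hDc hEup hDdown hdisj K n).2.2.2.1
      (sepFam ρ hρc hρt hρr E D hEc hDc hEup hDdown hdisj K n).2.2.2.2.1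
      (sepFam ρ hρc hρt hρr E D hEc hDc hEup hDdown hdisj K n).2.2.2.2.2 (2^n)
      (Nat.pow_pos Nat.zero_lt_two))).2 x hx (K.subset_succ n hx)

end Global
section Global2

variable {X : Type*} [TopologicalSpace X] [LocallyCompactSpace X] [SigmaCompactSpace X]
  [T2Space X]

theorem sep_global (ρ : Set (X × X)) (hρc : IsClosed ρ) (hρt : RelTrans ρ)
    (hρr : ∀ x : X, (x, x) ∈ ρ) (E D : Set X) (hEc : IsClosed E) (hDc : IsClosed D)
    (hEup : ∀ x y : X, (x, y) ∈ ρ → x ∈ E → y ∈ E)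
    (hDdown : ∀ x y : X, (x, y) ∈ ρ → y ∈ D → x ∈ D) (hdisj : E ∩ D = ∅) :
    ∃ u : X → ℝ, Continuous u ∧ (∀ x, u x ∈ Set.Icc (0:ℝ) 1) ∧
      (∀ x y : X, (x, y) ∈ ρ → u x ≤ u y) ∧ (∀ x ∈ E, u x = 1) ∧ (∀ x ∈ D, u x = 0) := by
  classical
  set K := CompactExhaustion.choice X with hK
  set F : ℕ → X → ℝ :=
    fun n => (sepFam ρ hρc hρt hρr E D hEc hDc hEup hDdown hdisj K n).1 with hF
  have hprops : ∀ n, SepProps ρ E D (K n) (F n) :=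
    fun n => (sepFam ρ hρc hρt hρr E D hEc hDc hEup hDdown hdisj K n).2
  have hclose : ∀ n, ∀ x ∈ K n, |F (n+1) x - F n x| ≤ (2⁻¹ : ℝ)^n := by
    intro n x hx
    have h := sepFam_close ρ hρc hρt hρr E D hEc hDc hEup hDdown hdisj K n x hx
    have hcast : (1 : ℝ) / ((2^n : ℕ) : ℝ) = (2⁻¹ : ℝ)^n := by
      push_cast
      rw [one_div, inv_pow]
    rwa [hcast] at h
  have hmemK : ∀ (n m : ℕ), n ≤ m → (K n : Set X) ⊆ K m := fun n m h => K.subset h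
  -- telescoping bound
  have htel : ∀ (m : ℕ) (x : X), x ∈ K m → ∀ (n : ℕ), m ≤ n → ∀ (j : ℕ),
      |F (n+j) x - F n x| ≤ 2 * (2⁻¹:ℝ)^n := by
    intro m x hx n hmn j
    have hsum : |F (n+j) x - F n x| ≤ ∑ i ∈ Finset.range j, (2⁻¹:ℝ)^(n+i) := by
      induction j with
      | zero => simp
      | succ j ih =>
        have h1 : |F (n+j+1) x - F (n+j) x| ≤ (2⁻¹:ℝ)^(n+j) :=
          hclose (n+j) x (hmemK m (n+j) (hmn.trans (Nat.le_add_right n j)) hx)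
        calc |F (n+(j+1)) x - F n x|
            ≤ |F (n+(j+1)) x - F (n+j) x| + |F (n+j) x - F n x| := by
              have := abs_sub_le (F (n+(j+1)) x) (F (n+j) x) (F n x)
              simpa using this
          _ ≤ (2⁻¹:ℝ)^(n+j) + ∑ i ∈ Finset.range j, (2⁻¹:ℝ)^(n+i) := by
              apply add_le_add _ ih
              simpa [show n+(j+1) = n+j+1 by omega] using h1
          _ = ∑ i ∈ Finset.range (j+1), (2⁻¹:ℝ)^(n+i) := by
              rw [Finset.sum_range_succ]
              ring
    refine hsum.trans ?_
    have : ∑ i ∈ Finset.range j, (2⁻¹:ℝ)^(n+i) = (2⁻¹:ℝ)^n * ∑ i ∈ Finset.range j, (2⁻¹:ℝ)^i := by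
      rw [Finset.mul_sum]
      apply Finset.sum_congr rfl
      intro i _
      rw [pow_add]
    rw [this, mul_comm]
    apply mul_le_mul_of_nonneg_right _ (by positivity)
    have := sum_geometric_two_le j
    simpa [one_div] using this
  -- existence of limits
  have hcauchy : ∀ x : X, ∃ lx : ℝ, Filter.Tendsto (fun n => F n x) Filter.atTop (nhds lx) := by
    intro x
    obtain ⟨m, hm⟩ := K.exists_mem x
    have hc : CauchySeq (fun j => F (m + j) x) := by
      apply cauchySeq_of_le_geometric (2⁻¹:ℝ) ((2⁻¹:ℝ)^m) (by norm_num)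
      intro j
      rw [dist_eq_norm, Real.norm_eq_abs, abs_sub_comm]
      have h1 : |F ((m+j)+1) x - F (m+j) x| ≤ (2⁻¹:ℝ)^(m+j) :=
        hclose (m+j) x (hmemK m (m+j) (Nat.le_add_right m j) hm)
      calc |F (m+(j+1)) x - F (m+j) x| = |F ((m+j)+1) x - F (m+j) x| := by
            rw [show m+(j+1) = (m+j)+1 by omega]
        _ ≤ (2⁻¹:ℝ)^(m+j) := h1
        _ = (2⁻¹:ℝ)^m * (2⁻¹:ℝ)^j := pow_add _ _ _
    obtain ⟨lx, hlx⟩ := cauchySeq_tendsto_of_complete hc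
    refine ⟨lx, ?_⟩
    have hlx' : Filter.Tendsto (fun j => F (j + m) x) Filter.atTop (nhds lx) := by
      simpa [add_comm] using hlx
    exact (Filter.tendsto_add_atTop_iff_nat m).1 hlx'
  choose u hu using hcauchy
  -- uniform control of the limit
  have hunif : ∀ (m : ℕ) (x : X), x ∈ K m → ∀ n, m ≤ n → |u x - F n x| ≤ 2*(2⁻¹:ℝ)^n := by
    intro m x hx n hmn
    have ht : Filter.Tendsto (fun j => |F (n+j) x - F n x|) Filter.atTop
        (nhds (|u x - F n x|)) := by
      apply Filter.Tendsto.abs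
      apply Filter.Tendsto.sub_const
      have : Filter.Tendsto (fun j => F (j + n) x) Filter.atTop (nhds (u x)) :=
        (Filter.tendsto_add_atTop_iff_nat n).2 (hu x)
      simpa [add_comm] using this
    exact le_of_tendsto ht (Filter.Eventually.of_forall fun j => htel m x hx n hmn j)
  refine ⟨u, ?_, ?_, ?_, ?_, ?_⟩
  · -- continuity
    rw [continuous_iff_continuousAt]
    intro x₀
    obtain ⟨m, hm⟩ := K.exists_mem x₀
    rw [ContinuousAt, Metric.tendsto_nhds]
    intro ε hε
    obtain ⟨n₀, hn₀⟩ := exists_pow_lt_of_lt_one (show (0:ℝ) < ε/6 by linarith)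
      (show (2⁻¹:ℝ) < 1 by norm_num)
    set n := max n₀ (m+1) with hn
    have hpow : (2⁻¹:ℝ)^n ≤ (2⁻¹:ℝ)^n₀ :=
      pow_le_pow_of_le_one (by norm_num) (by norm_num) (le_max_left _ _)
    have hεbound : 2*(2⁻¹:ℝ)^n < ε/3 := by
      have := hpow.trans_lt hn₀
      linarith
    have hcont : Filter.Tendsto (F n) (nhds x₀) (nhds (F n x₀)) := (hprops n).1.continuousAt
    have hev1 : ∀ᶠ y in nhds x₀, dist (F n y) (F n x₀) < ε/3 :=
      (Metric.tendsto_nhds.1 hcont) (ε/3) (by linarith)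
    have hev2 : ∀ᶠ y in nhds x₀, y ∈ interior (K (m+1)) :=
      isOpen_interior.mem_nhds (K.subset_interior_succ m hm)
    filter_upwards [hev1, hev2] with y h1 h2
    have hyK : y ∈ K (m+1) := interior_subset h2
    have hb1 : |u y - F n y| ≤ 2*(2⁻¹:ℝ)^n := hunif (m+1) y hyK n (le_max_right _ _)
    have hb3 : |u x₀ - F n x₀| ≤ 2*(2⁻¹:ℝ)^n :=
      hunif m x₀ hm n ((Nat.le_succ m).trans (le_max_right _ _))
    rw [Real.dist_eq] at h1 ⊢
    have t1 : |u y - u x₀| ≤ |u y - F n y| + |F n y - u x₀| := abs_sub_le _ _ _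
    have t2 : |F n y - u x₀| ≤ |F n y - F n x₀| + |F n x₀ - u x₀| := abs_sub_le _ _ _
    have t3 : |F n x₀ - u x₀| = |u x₀ - F n x₀| := abs_sub_comm _ _
    linarith
  · -- range
    intro x
    constructor
    · apply ge_of_tendsto (hu x)
      exact Filter.Eventually.of_forall fun n => ((hprops n).2.1 x).1
    · apply le_of_tendsto (hu x)
      exact Filter.Eventually.of_forall fun n => ((hprops n).2.1 x).2
  · -- monotone
    intro x y hxy
    obtain ⟨a, ha⟩ := K.exists_mem x
    obtain ⟨b, hb⟩ := K.exists_mem y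
    have hxm : x ∈ K (max a b) := hmemK a (max a b) (le_max_left _ _) ha
    have hym : y ∈ K (max a b) := hmemK b (max a b) (le_max_right _ _) hb
    apply le_of_tendsto_of_tendsto (hu x) (hu y)
    rw [Filter.EventuallyLE, Filter.eventually_atTop]
    refine ⟨max a b, fun n hn => ?_⟩
    exact (hprops n).2.2.1 x y (hmemK _ n hn hxm) (hmemK _ n hn hym) hxy
  · -- value 1 on E
    intro x hx
    obtain ⟨m, hm⟩ := K.exists_mem x
    have hev : ∀ᶠ n in Filter.atTop, F n x = (1:ℝ) := by
      rw [Filter.eventually_atTop]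
      exact ⟨m, fun n hn => (hprops n).2.2.2.1 x hx (hmemK m n hn hm)⟩
    have : Filter.Tendsto (fun n => F n x) Filter.atTop (nhds 1) :=
      Filter.Tendsto.congr' (Filter.EventuallyEq.symm hev) tendsto_const_nhds
    exact tendsto_nhds_unique (hu x) this
  · -- value 0 on D
    intro x hx
    obtain ⟨m, hm⟩ := K.exists_mem x
    have hev : ∀ᶠ n in Filter.atTop, F n x = (0:ℝ) := by
      rw [Filter.eventually_atTop]
      exact ⟨m, fun n hn => (hprops n).2.2.2.2 x hx (hmemK m n hn hm)⟩
    have : Filter.Tendsto (fun n => F n x) Filter.atTop (nhds 0) :=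
      Filter.Tendsto.congr' (Filter.EventuallyEq.symm hev) tendsto_const_nhds
    exact tendsto_nhds_unique (hu x) this

end Global2

section MainTheorem

open MeasureTheory intervalIntegral

/-- Let `φ` be a semiflow on a locally compact, σ-compact Hausdorff
space `X`, let `𝒢φ = 𝒢(φ^I)` where `φ^I = {(x, φ(t,x)) : 0 ≤ t ≤ 1}`, let `A` be a
closed set with `𝒢φ(A) = A` and `x₀ ∉ A`.  Then there is a φ-Lipschitz Lyapunov
function `L : X → [0,1]` for `φ` with `L(x₀) = 0` and `L = 1` on `A`. -/
theorem semiflow_lipschitz_lyapunov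
    {X : Type*} [TopologicalSpace X] [LocallyCompactSpace X]
    [SigmaCompactSpace X] [T2Space X]
    (φ : ℝ≥0 × X → X) (hφc : Continuous φ)
    (hφ0 : ∀ x : X, φ (0, x) = x)
    (hφadd : ∀ (t s : ℝ≥0) (x : X), φ (t, φ (s, x)) = φ (t + s, x))
    (A : Set X) (hA : IsClosed A)
    (hAinv : relImage
      (gRel {p : X × X | ∃ t : ℝ≥0, t ≤ 1 ∧ p.2 = φ (t, p.1)}) A = A)
    (x₀ : X) (hx₀ : x₀ ∉ A) :
    ∃ L : X → ℝ, Continuous L ∧ (∀ x : X, L x ∈ Set.Icc (0:ℝ) 1) ∧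
      L x₀ = 0 ∧ (∀ y ∈ A, L y = 1) ∧
      (∀ (t : ℝ≥0) (x : X), L x ≤ L (φ (t, x))) ∧
      (∃ M : ℝ, 0 ≤ M ∧ ∀ (t : ℝ≥0) (x : X), |L (φ (t, x)) - L x| ≤ M * (t : ℝ)) := by
  classical
  set φI : Set (X × X) := {p : X × X | ∃ t : ℝ≥0, t ≤ 1 ∧ p.2 = φ (t, p.1)} with hφI
  set G : Set (X × X) := gRel φI with hGdef
  set ρ : Set (X × X) := G ∪ Set.diagonal X with hρdef
  have hφIG : φI ⊆ G := subset_gRel _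
  have hGc : IsClosed G := gRel_isClosed _
  have hGt : RelTrans G := gRel_trans _
  have hρc : IsClosed ρ := hGc.union isClosed_diagonal
  have hρt : RelTrans ρ := by
    rintro x y z (hxy | hxy) (hyz | hyz)
    · exact Or.inl (hGt x y z hxy hyz)
    · have : y = z := hyz
      subst this
      exact Or.inl hxy
    · have : x = y := hxy
      subst this
      exact Or.inl hyz
    · have h1 : x = y := hxy
      have h2 : y = z := hyz
      subst h1; subst h2
      exact Or.inr rfl
  have hρr : ∀ x : X, (x, x) ∈ ρ := fun x => Or.inr rfl
  have hGA : ∀ z, z ∈ A → ∀ y, (z, y) ∈ G → y ∈ A := by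
    intro z hz y hzy
    have : y ∈ relImage G A := ⟨z, hz, hzy⟩
    rwa [hGdef, hAinv] at this
  have hEup : ∀ x y : X, (x, y) ∈ ρ → x ∈ A → y ∈ A := by
    rintro x y (hxy | hxy) hx
    · exact hGA x hx y hxy
    · have : x = y := hxy
      rwa [← this]
  -- choose ε > 0 such that the orbit of x₀ up to time ε avoids A
  have hcont0 : Continuous (fun t : ℝ≥0 => φ (t, x₀)) :=
    hφc.comp (continuous_id.prodMk continuous_const)
  have hmem : {t : ℝ≥0 | φ (t, x₀) ∉ A} ∈ nhds (0 : ℝ≥0) := by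
    have hopen : IsOpen {t : ℝ≥0 | φ (t, x₀) ∉ A} := hA.isOpen_compl.preimage hcont0
    apply hopen.mem_nhds
    show φ (0, x₀) ∉ A
    rw [hφ0]
    exact hx₀
  obtain ⟨δ, hδpos, hball⟩ := Metric.mem_nhds_iff.1 hmem
  set ε : ℝ≥0 := Real.toNNReal (δ/2) with hεdef
  have hεpos : 0 < ε := by
    rw [hεdef]
    apply Real.toNNReal_pos.2
    linarith
  have hεorbit : ∀ t : ℝ≥0, t ≤ ε → φ (t, x₀) ∉ A := by
    intro t ht
    apply hball
    rw [Metric.mem_ball]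
    have h1 : (t : ℝ) ≤ δ/2 := by
      have := NNReal.coe_le_coe.2 ht
      rwa [hεdef, Real.coe_toNNReal _ (by linarith)] at this
    have : dist t (0:ℝ≥0) = |(t:ℝ) - ((0:ℝ≥0):ℝ)| := by
      rw [NNReal.dist_eq]
    rw [this]
    simp only [NNReal.coe_zero, sub_zero]
    rw [abs_of_nonneg t.coe_nonneg]
    linarith
  -- the compact orbit segment and its down-saturation
  set Γ : Set X := (fun t : ℝ≥0 => φ (t, x₀)) '' (Set.Icc 0 ε) with hΓdef
  have hΓcompact : IsCompact Γ := (isCompact_Icc).image hcont0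
  have hΓA : ∀ g ∈ Γ, g ∉ A := by
    rintro g ⟨t, htmem, rfl⟩
    exact hεorbit t htmem.2
  set D : Set X := {x | ∃ g ∈ Γ, (x, g) ∈ ρ} with hDdef
  have hDc : IsClosed D := isClosed_downSat hρc hΓcompact
  have hDdown : ∀ x y : X, (x, y) ∈ ρ → y ∈ D → x ∈ D := by
    rintro x y hxy ⟨g, hg, hyg⟩
    exact ⟨g, hg, hρt x y g hxy hyg⟩
  have hx₀Γ : x₀ ∈ Γ := ⟨0, ⟨le_refl 0, zero_le⟩, hφ0 x₀⟩
  have hx₀D : x₀ ∈ D := ⟨x₀, hx₀Γ, hρr x₀⟩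
  have hdisj : A ∩ D = ∅ := by
    apply Set.eq_empty_of_subset_empty
    rintro z ⟨hzA, g, hg, hzg⟩
    rcases hzg with hzg | hzg
    · exact hΓA g hg (hGA z hzA g hzg)
    · have : z = g := hzg
      rw [this] at hzA
      exact hΓA g hg hzA
  -- the separating monotone function
  obtain ⟨u, huc, hu01, humono, huE, huD⟩ :=
    sep_global ρ hρc hρt hρr A D hA hDc hEup hDdown hdisj
  -- Lyapunov property of u for all times
  have hbase : ∀ s : ℝ≥0, s ≤ 1 → ∀ y : X, u y ≤ u (φ (s, y)) := by
    intro s hs y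
    exact humono y (φ (s, y)) (Or.inl (hφIG ⟨s, hs, rfl⟩))
  have hglobn : ∀ n : ℕ, ∀ t : ℝ≥0, t ≤ (n : ℝ≥0) → ∀ y : X, u y ≤ u (φ (t, y)) := by
    intro n
    induction n with
    | zero =>
      intro t ht y
      have : t = 0 := le_antisymm (by exact_mod_cast ht) zero_le
      rw [this, hφ0]
    | succ n ih =>
      intro t ht y
      by_cases hcase : t ≤ (n : ℝ≥0)
      · exact ih t hcase y
      · push_neg at hcase
        have hnt : (n : ℝ≥0) ≤ t := le_of_lt hcase
        set s : ℝ≥0 := t - (n : ℝ≥0) with hsdef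
        have hts : s + (n : ℝ≥0) = t := tsub_add_cancel_of_le hnt
        have hs1 : s ≤ 1 := by
          rw [hsdef]
          rw [tsub_le_iff_right]
          calc t ≤ ((n+1 : ℕ) : ℝ≥0) := ht
            _ = 1 + (n : ℝ≥0) := by push_cast; ring
        calc u y ≤ u (φ ((n : ℝ≥0), y)) := ih (n : ℝ≥0) (le_refl _) y
          _ ≤ u (φ (s, φ ((n : ℝ≥0), y))) := hbase s hs1 _
          _ = u (φ (t, y)) := by rw [hφadd, hts]
  have hglob : ∀ (t : ℝ≥0) (y : X), u y ≤ u (φ (t, y)) := by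
    intro t y
    obtain ⟨n, hn⟩ := exists_nat_ge t
    exact hglobn n t hn y
  -- forward invariance of A
  have hAfwdn : ∀ n : ℕ, ∀ t : ℝ≥0, t ≤ (n : ℝ≥0) → ∀ a ∈ A, φ (t, a) ∈ A := by
    intro n
    induction n with
    | zero =>
      intro t ht a ha
      have : t = 0 := le_antisymm (by exact_mod_cast ht) zero_le
      rwa [this, hφ0]
    | succ n ih =>
      intro t ht a ha
      by_cases hcase : t ≤ (n : ℝ≥0)
      · exact ih t hcase a ha
      · push_neg at hcase
        have hnt : (n : ℝ≥0) ≤ t := le_of_lt hcase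
        set s : ℝ≥0 := t - (n : ℝ≥0) with hsdef
        have hts : s + (n : ℝ≥0) = t := tsub_add_cancel_of_le hnt
        have hs1 : s ≤ 1 := by
          rw [hsdef, tsub_le_iff_right]
          calc t ≤ ((n+1 : ℕ) : ℝ≥0) := ht
            _ = 1 + (n : ℝ≥0) := by push_cast; ring
        have h1 : φ ((n : ℝ≥0), a) ∈ A := ih (n : ℝ≥0) (le_refl _) a ha
        have h2 : φ (s, φ ((n : ℝ≥0), a)) ∈ A :=
          hGA _ h1 _ (hφIG ⟨s, hs1, rfl⟩)
        rwa [hφadd, hts] at h2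
  have hAfwd : ∀ (t : ℝ≥0) (a : X), a ∈ A → φ (t, a) ∈ A := by
    intro t a ha
    obtain ⟨n, hn⟩ := exists_nat_ge t
    exact hAfwdn n t hn a ha
  -- the averaged function
  set H : X → ℝ → ℝ := fun x s => u (φ (Real.toNNReal s, x)) with hHdef
  have hHcont : Continuous (Function.uncurry H) := by
    apply huc.comp
    apply hφc.comp
    exact (continuous_real_toNNReal.comp continuous_snd).prodMk continuous_fst
  have hHxcont : ∀ x, Continuous (H x) := by
    intro x
    have : H x = Function.uncurry H ∘ (fun s => (x, s)) := rfl
    rw [this]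
    exact hHcont.comp (continuous_const.prodMk continuous_id)
  have hHint : ∀ (x : X) (a b : ℝ), IntervalIntegrable (H x) MeasureTheory.volume a b :=
    fun x a b => (hHxcont x).intervalIntegrable a b
  have hH01 : ∀ x s, H x s ∈ Set.Icc (0:ℝ) 1 := fun x s => hu01 _
  have hεR : (0:ℝ) < (ε : ℝ) := hεpos
  set L : X → ℝ := fun x => (∫ s in (0:ℝ)..(ε:ℝ), H x s) / (ε : ℝ) with hLdef
  have hIub : ∀ x, (∫ s in (0:ℝ)..(ε:ℝ), H x s) ≤ (ε : ℝ) := by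
    intro x
    calc (∫ s in (0:ℝ)..(ε:ℝ), H x s) ≤ ∫ s in (0:ℝ)..(ε:ℝ), (1:ℝ) := by
          apply intervalIntegral.integral_mono_on hεR.le (hHint x 0 ε)
            (intervalIntegrable_const)
          intro s _
          exact (hH01 x s).2
      _ = (ε : ℝ) := by
          rw [intervalIntegral.integral_const, smul_eq_mul, sub_zero, mul_one]
  have hIlb : ∀ x, (0:ℝ) ≤ ∫ s in (0:ℝ)..(ε:ℝ), H x s := by
    intro x
    apply intervalIntegral.integral_nonneg hεR.le
    intro s _
    exact (hH01 x s).1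
  -- monotonicity of integrals along the flow
  have hImono : ∀ (t : ℝ≥0) (x : X),
      (∫ s in (0:ℝ)..(ε:ℝ), H x s) ≤ ∫ s in (0:ℝ)..(ε:ℝ), H (φ (t, x)) s := by
    intro t x
    apply intervalIntegral.integral_mono_on hεR.le (hHint x 0 ε) (hHint _ 0 ε)
    intro s _
    rw [hHdef]
    simp only
    rw [hφadd]
    exact hglob t (φ (Real.toNNReal s, x)) |>.trans (le_of_eq (by rw [hφadd, add_comm]))
  refine ⟨L, ?_, ?_, ?_, ?_, ?_, ⟨1 / (ε:ℝ), by positivity, ?_⟩⟩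
  · -- continuity
    apply Continuous.div_const
    exact intervalIntegral.continuous_parametric_intervalIntegral_of_continuous'
      (μ := MeasureTheory.volume) hHcont 0 (ε : ℝ)
  · -- range
    intro x
    constructor
    · exact div_nonneg (hIlb x) hεR.le
    · rw [div_le_one hεR]
      exact hIub x
  · -- L x₀ = 0
    have hzero : ∀ s ∈ Set.uIcc (0:ℝ) (ε:ℝ), H x₀ s = 0 := by
      intro s hs
      rw [Set.uIcc_of_le hεR.le] at hs
      have hsε : Real.toNNReal s ≤ ε := by
        rw [← Real.toNNReal_coe (r := ε)]
        exact Real.toNNReal_mono hs.2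
      apply huD
      exact ⟨φ (Real.toNNReal s, x₀), ⟨Real.toNNReal s, ⟨zero_le, hsε⟩, rfl⟩, hρr _⟩
    rw [hLdef]
    simp only
    rw [intervalIntegral.integral_congr hzero]
    simp
  · -- L = 1 on A
    intro y hy
    have hone : ∀ s ∈ Set.uIcc (0:ℝ) (ε:ℝ), H y s = 1 := by
      intro s _
      exact huE _ (hAfwd (Real.toNNReal s) y hy)
    rw [hLdef]
    simp only
    rw [intervalIntegral.integral_congr hone, intervalIntegral.integral_const, smul_eq_mul,
      sub_zero, mul_one, div_self (ne_of_gt hεR)]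
  · -- Lyapunov
    intro t x
    rw [hLdef]
    simp only
    exact (div_le_div_iff_of_pos_right hεR).2 (hImono t x)
  · -- Lipschitz
    intro t x
    have hmono' := hImono t x
    have habs : |L (φ (t, x)) - L x| = L (φ (t, x)) - L x := by
      apply abs_of_nonneg
      have := (div_le_div_iff_of_pos_right hεR).2 hmono'
      rw [hLdef]
      simp only
      linarith [this]
    rw [habs]
    -- rewrite the shifted integral
    set w : ℝ → ℝ := fun σ => u (φ (Real.toNNReal σ, x)) with hwdef
    have hwcont : Continuous w := hHxcont x
    have hwint : ∀ a b : ℝ, IntervalIntegrable w MeasureTheory.volume a b :=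
      fun a b => hwcont.intervalIntegrable a b
    have hw01 : ∀ σ, w σ ∈ Set.Icc (0:ℝ) 1 := fun σ => hu01 _
    have hshift : (∫ s in (0:ℝ)..(ε:ℝ), H (φ (t, x)) s) = ∫ s in (0:ℝ)..(ε:ℝ), w (s + (t:ℝ)) := by
      apply intervalIntegral.integral_congr
      intro s hs
      rw [Set.uIcc_of_le hεR.le] at hs
      rw [hHdef, hwdef]
      simp only
      rw [hφadd]
      congr 1
      congr 1
      rw [Real.toNNReal_add hs.1 t.coe_nonneg, Real.toNNReal_coe, add_comm]
    have hshift2 : (∫ s in (0:ℝ)..(ε:ℝ), w (s + (t:ℝ))) = ∫ s in (t:ℝ)..((ε:ℝ)+(t:ℝ)), w s := by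
      have := intervalIntegral.integral_comp_add_right (a := (0:ℝ)) (b := (ε:ℝ)) w (t:ℝ)
      rw [this, zero_add]
    have hsplit1 : (∫ s in (t:ℝ)..((ε:ℝ)+(t:ℝ)), w s) =
        (∫ s in (t:ℝ)..(ε:ℝ)+0, w s) + ∫ s in ((ε:ℝ)+0)..((ε:ℝ)+(t:ℝ)), w s := by
      rw [intervalIntegral.integral_add_adjacent_intervals (hwint _ _) (hwint _ _)]
    have hsplit2 : (∫ s in (0:ℝ)..(ε:ℝ), w s) =
        (∫ s in (0:ℝ)..(t:ℝ), w s) + ∫ s in (t:ℝ)..(ε:ℝ), w s := by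
      rw [intervalIntegral.integral_add_adjacent_intervals (hwint _ _) (hwint _ _)]
    have hI0w : (∫ s in (0:ℝ)..(ε:ℝ), H x s) = ∫ s in (0:ℝ)..(ε:ℝ), w s := rfl
    have hb1 : (∫ s in ((ε:ℝ))..((ε:ℝ)+(t:ℝ)), w s) ≤ (t:ℝ) := by
      have := intervalIntegral.norm_integral_le_of_norm_le_const
        (C := 1) (f := w) (a := (ε:ℝ)) (b := (ε:ℝ)+(t:ℝ)) ?_
      · have h2 : |(ε:ℝ)+(t:ℝ) - (ε:ℝ)| = (t:ℝ) := by
          rw [add_sub_cancel_left, abs_of_nonneg t.coe_nonneg]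
        rw [Real.norm_eq_abs, h2, one_mul] at this
        exact (le_abs_self _).trans this
      · intro σ _
        rw [Real.norm_eq_abs, abs_of_nonneg (hw01 σ).1]
        exact (hw01 σ).2
    have hb2 : (0:ℝ) ≤ ∫ s in (0:ℝ)..(t:ℝ), w s := by
      apply intervalIntegral.integral_nonneg t.coe_nonneg
      intro σ _
      exact (hw01 σ).1
    rw [hLdef]
    simp only
    rw [div_sub_div_same]
    rw [div_le_iff₀ hεR]
    have hgoal : (∫ s in (0:ℝ)..(ε:ℝ), H (φ (t, x)) s) - (∫ s in (0:ℝ)..(ε:ℝ), H x s) ≤ (t:ℝ) := by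
      rw [hshift, hshift2, hI0w]
      have e1 : (∫ s in (t:ℝ)..((ε:ℝ)+(t:ℝ)), w s) - (∫ s in (0:ℝ)..(ε:ℝ), w s) =
          (∫ s in ((ε:ℝ))..((ε:ℝ)+(t:ℝ)), w s) - (∫ s in (0:ℝ)..(t:ℝ), w s) := by
        have h1 := hsplit1
        have h2 := hsplit2
        rw [add_zero] at h1
        linarith
      rw [e1]
      linarith
    calc (∫ s in (0:ℝ)..(ε:ℝ), H (φ (t, x)) s) - (∫ s in (0:ℝ)..(ε:ℝ), H x s) ≤ (t:ℝ) := hgoal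
      _ = 1 / (ε:ℝ) * (t:ℝ) * (ε:ℝ) := by field_simp


end MainTheorem
end

section
/- Let X be a locally compact, σ-compact Hausdorff space and let φ : ℝ × X → X be a flow: φ is continuous, φ(0,x) = x and φ(t, φ(s,x)) = φ(t+s, x) for all t, s ∈ ℝ, x ∈ X. The following are equivalent: (i) the orbit relation 𝒪φ = {(x, φ(t,x)) : t ≥ 0, x ∈ X} is a closed subset of X × X, and there is no periodic point, i.e. no x ∈ X and t ≥ 1 with φ(t,x) = x; (ii) Ωφ = ⋂_{T ≥ 0} closure({(x, φ(t,x)) : t ≥ T, x ∈ X}) is empty; (iii) φ is parallelizable: there exist a topological space Y and a homeomorphism h : ℝ × Y → X such that φ(t, h(s,y)) = h(t+s, y) for all t, s ∈ ℝ and y ∈ Y. -/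
set_option linter.unusedSectionVars false
set_option maxHeartbeats 1000000

universe u

/-- The flow `φ` on `X` is parallelized by the homeomorphism `h : ℝ × Y → X`, i.e.
`h` is an isomorphism from the translation flow on `ℝ × Y` to `φ`. -/
def Parallelizes {X : Type u} [TopologicalSpace X] (φ : ℝ × X → X)
    (Y : Type u) [TopologicalSpace Y] (h : ℝ × Y → X) : Prop :=
  IsHomeomorph h ∧ ∀ (t s : ℝ) (y : Y), φ (t, h (s, y)) = h (t + s, y)

open Set Topology Function


namespace Par17c

section Slice
variable {X : Type u} [TopologicalSpace X] {Z : Type v} [TopologicalSpace Z]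

theorem isClosed_exists_slice {F : ℝ × X → Z} (hF : Continuous F)
    {I : Set ℝ} (hI : IsCompact I) {C : Set Z} (hC : IsClosed C) :
    IsClosed {y : X | ∃ u ∈ I, F (u, y) ∈ C} := by
  haveI : CompactSpace I := isCompact_iff_compactSpace.mp hI
  have heq : {y : X | ∃ u ∈ I, F (u, y) ∈ C} =
      Prod.snd '' ((fun p : I × X => F (p.1.1, p.2)) ⁻¹' C) := by
    ext y
    simp only [mem_setOf_eq, mem_image, mem_preimage, Prod.exists, Subtype.exists]
    constructor
    · rintro ⟨u, hu, h⟩; exact ⟨u, hu, y, h, rfl⟩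
    · rintro ⟨u, hu, y', h, rfl⟩; exact ⟨u, hu, h⟩
  rw [heq]
  apply isClosedMap_snd_of_compactSpace
  exact hC.preimage (hF.comp ((continuous_subtype_val.comp continuous_fst).prodMk continuous_snd))

theorem isOpen_forall_slice {F : ℝ × X → Z} (hF : Continuous F)
    {I : Set ℝ} (hI : IsCompact I) {O : Set Z} (hO : IsOpen O) :
    IsOpen {y : X | ∀ u ∈ I, F (u, y) ∈ O} := by
  rw [← isClosed_compl_iff]
  have : {y : X | ∀ u ∈ I, F (u, y) ∈ O}ᶜ = {y : X | ∃ u ∈ I, F (u, y) ∈ Oᶜ} := by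
    ext y; simp [not_forall]
  rw [this]
  exact isClosed_exists_slice hF hI hO.isClosed_compl

end Slice

variable {X : Type u} [TopologicalSpace X]

def ST (φ : ℝ × X → X) (T : ℝ) : Set (X × X) :=
  {p : X × X | ∃ t : ℝ, T ≤ t ∧ p.2 = φ (t, p.1)}

def Om (φ : ℝ × X → X) : Set (X × X) :=
  ⋂ T ∈ Set.Ici (0:ℝ), closure (ST φ T)

section
variable [T2Space X]
variable (φ : ℝ × X → X) (hφc : Continuous φ)
variable (hφ0 : ∀ x : X, φ (0, x) = x)
variable (hφadd : ∀ (t s : ℝ) (x : X), φ (t, φ (s, x)) = φ (t + s, x))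

include hφ0 hφadd in
theorem phi_neg (t : ℝ) (x : X) : φ (-t, φ (t, x)) = x := by
  rw [hφadd, neg_add_cancel, hφ0]

theorem ST_antitone {T T' : ℝ} (h : T ≤ T') : ST φ T' ⊆ ST φ T := by
  rintro p ⟨t, ht, hp⟩; exact ⟨t, h.trans ht, hp⟩

include hφ0 hφadd in
theorem phi_nsmul (t : ℝ) (x : X) (hx : φ (t, x) = x) (n : ℕ) : φ (n * t, x) = x := by
  induction n with
  | zero => simpa using hφ0 x
  | succ n ih =>
    have h1 : φ (t, φ (n * t, x)) = φ (t + n * t, x) := hφadd _ _ _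
    rw [ih, hx] at h1
    have h2 : ((n:ℝ)+1) * t = t + n * t := by ring
    push_cast
    rw [h2, ← h1]

include hφc hφ0 hφadd in
/-- If `Ω = ∅` then there is no point of period `≥ 1`. -/
theorem noPeriodic_of_omega_empty (hΩ : Om φ = ∅) :
    ¬ ∃ (x : X) (t : ℝ), 1 ≤ t ∧ φ (t, x) = x := by
  rintro ⟨x, t, ht, hx⟩
  have key : ∀ T : ℝ, T ∈ Set.Ici (0:ℝ) → ((x, x) : X × X) ∈ closure (ST φ T) := by
    intro T hT
    apply subset_closure
    obtain ⟨n, hn⟩ := exists_nat_ge T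
    refine ⟨n * t, ?_, (phi_nsmul φ hφ0 hφadd t x hx n).symm⟩
    calc T ≤ n := hn
    _ = n * 1 := by ring
    _ ≤ n * t := by nlinarith [Nat.cast_nonneg (α := ℝ) n]
  have : ((x,x) : X × X) ∈ Om φ := Set.mem_iInter₂.mpr key
  rw [hΩ] at this; exact this

include hφ0 hφadd in
/-- Any point with `φ (t, x) = x` for `t ≠ 0` yields a period-one point; so if there are no
periodic points of period `≥ 1`, the orbit maps are injective. -/
theorem periodic_of_ne (hNP : ¬ ∃ (x : X) (t : ℝ), 1 ≤ t ∧ φ (t, x) = x)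
    {t : ℝ} {x : X} (hx : φ (t, x) = x) : t = 0 := by
  by_contra h
  -- produce a period |t| point
  have habs : φ (|t|, x) = x := by
    rcases abs_cases t with ⟨h1, _⟩ | ⟨h1, _⟩
    · rwa [h1]
    · rw [h1]
      have := phi_neg φ hφ0 hφadd t x
      rwa [hx] at this
  have hpos : 0 < |t| := abs_pos.mpr h
  obtain ⟨n, hn⟩ := exists_nat_ge (1 / |t|)
  apply hNP
  have hper := phi_nsmul φ hφ0 hφadd _ _ habs (n+1)
  refine ⟨x, ((n:ℕ)+1 : ℕ) * |t|, ?_, hper⟩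
  have hn' : (1:ℝ) / |t| ≤ (n:ℝ) + 1 := by linarith
  rw [div_le_iff₀ hpos] at hn'
  push_cast
  nlinarith

include hφ0 hφadd in
theorem inj_time (hNP : ¬ ∃ (x : X) (t : ℝ), 1 ≤ t ∧ φ (t, x) = x)
    {t s : ℝ} {x : X} (h : φ (t, x) = φ (s, x)) : t = s := by
  have : φ (t - s, x) = x := by
    have h2 : φ (-s, φ (s, x)) = x := phi_neg φ hφ0 hφadd s x
    have h3 : φ (-s, φ (t, x)) = φ (-s + t, x) := hφadd _ _ _
    rw [h, h2] at h3
    have h4 : t - s = -s + t := by ring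
    rw [h4, ← h3]
  have := periodic_of_ne φ hφ0 hφadd hNP this
  linarith [this]


include hφc in
/-- The "bounded-time" orbit relation is closed. -/
theorem isClosed_CT (T : ℝ) :
    IsClosed {p : X × X | ∃ t ∈ Icc (0:ℝ) T, p.2 = φ (t, p.1)} := by
  have heq : {p : X × X | ∃ t ∈ Icc (0:ℝ) T, p.2 = φ (t, p.1)} =
      {p : X × X | ∃ u ∈ Icc (0:ℝ) T,
        (fun q : ℝ × (X × X) => (q.2.2, φ (q.1, q.2.1))) (u, p) ∈ diagonal X} := by
    ext p
    simp [mem_diagonal_iff, eq_comm]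
  rw [heq]
  have hF : Continuous (fun q : ℝ × (X × X) => (q.2.2, φ (q.1, q.2.1))) := by
    apply Continuous.prodMk (by fun_prop)
    exact hφc.comp (continuous_fst.prodMk (continuous_fst.comp continuous_snd))
  exact isClosed_exists_slice hF isCompact_Icc isClosed_diagonal

include hφc hφ0 hφadd in
/-- If `Ω = ∅` then the orbit relation `S_0` is closed. -/
theorem isClosed_S0_of_omega_empty (hΩ : Om φ = ∅) : IsClosed (ST φ 0) := by
  refine isClosed_of_closure_subset ?_
  intro p hp
  -- since `Ω = ∅`, there is `T ≥ 0` with `p ∉ closure (ST φ T)`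
  have : p ∉ Om φ := by rw [hΩ]; exact notMem_empty p
  rw [Om, mem_iInter₂] at this
  push_neg at this
  obtain ⟨T, hT0, hpT⟩ := this
  -- `ST 0 ⊆ CT ∪ ST T`
  have hsub : ST φ 0 ⊆ {p : X × X | ∃ t ∈ Icc (0:ℝ) T, p.2 = φ (t, p.1)} ∪ ST φ T := by
    rintro q ⟨t, ht, hq⟩
    rcases le_total t T with h | h
    · exact Or.inl ⟨t, ⟨ht, h⟩, hq⟩
    · exact Or.inr ⟨t, h, hq⟩
  have := closure_mono hsub hp
  rw [closure_union, (isClosed_CT φ hφc T).closure_eq] at this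
  rcases this with h | h
  · obtain ⟨t, ht, hq⟩ := h
    exact ⟨t, ht.1, hq⟩
  · exact absurd h hpT

include hφc hφ0 hφadd in
/-- (i) → (ii): if the orbit relation is closed and there are no periodic points,
then `Ω` is empty. -/
theorem omega_empty_of_isClosed_noPeriodic (hC : IsClosed (ST φ 0))
    (hNP : ¬ ∃ (x : X) (t : ℝ), 1 ≤ t ∧ φ (t, x) = x) : Om φ = ∅ := by
  by_contra hne
  obtain ⟨p, hp⟩ := nonempty_iff_ne_empty.mpr hne
  rw [Om, mem_iInter₂] at hp
  -- `p ∈ ST φ 0`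
  obtain ⟨t₀, ht₀, hpt₀⟩ : p ∈ ST φ 0 := by
    have := hp 0 (mem_Ici.mpr (le_refl 0))
    rwa [hC.closure_eq] at this
  -- `(p.2, p.2)` is in every `closure (ST φ T)`
  have key : ∀ T : ℝ, 0 ≤ T → ((p.2, p.2) : X × X) ∈ closure (ST φ T) := by
    intro T hT
    set F : X × X → X × X := fun q => (φ (t₀, q.1), q.2) with hF
    have hFc : Continuous F := (hφc.comp (continuous_const.prodMk continuous_fst)).prodMk
      continuous_snd
    have hFim : F '' ST φ (T + t₀) ⊆ ST φ T := by
      rintro q ⟨r, ⟨t, ht, hr⟩, rfl⟩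
      refine ⟨t - t₀, by linarith, ?_⟩
      show r.2 = φ (t - t₀, φ (t₀, r.1))
      rw [hφadd, sub_add_cancel, hr]
    have h1 : F p ∈ closure (ST φ T) := by
      have h2 := hp (T + t₀) (mem_Ici.mpr (by linarith))
      have h3 : F p ∈ F '' closure (ST φ (T + t₀)) := mem_image_of_mem F h2
      have h4 := (image_closure_subset_closure_image hFc) h3
      exact closure_mono hFim h4
    have hFp : F p = (p.2, p.2) := by
      rw [hF]; simp only [hpt₀]
    rwa [hFp] at h1
  -- transport once more by time `1`
  set G : X × X → X × X := fun q => (φ (1, q.1), q.2) with hG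
  have hGc : Continuous G := (hφc.comp (continuous_const.prodMk continuous_fst)).prodMk
    continuous_snd
  have hGim : G '' ST φ 2 ⊆ ST φ 0 := by
    rintro q ⟨r, ⟨t, ht, hr⟩, rfl⟩
    refine ⟨t - 1, by linarith, ?_⟩
    show r.2 = φ (t - 1, φ (1, r.1))
    rw [hφadd, sub_add_cancel, hr]
  have h5 : G (p.2, p.2) ∈ closure (ST φ 0) := by
    have h2 := key 2 (by norm_num)
    have h3 : G (p.2, p.2) ∈ G '' closure (ST φ 2) := mem_image_of_mem G h2
    exact closure_mono hGim ((image_closure_subset_closure_image hGc) h3)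
  rw [hC.closure_eq] at h5
  obtain ⟨u, hu, hu2⟩ := h5
  apply hNP
  refine ⟨p.2, u + 1, by linarith, ?_⟩
  have : φ (u, φ (1, p.2)) = φ (u + 1, p.2) := hφadd _ _ _
  rw [← this]
  exact hu2.symm

include hφc hφ0 hφadd in
/-- In a flow with empty `Ω`, return times to a compact set are bounded. -/
theorem bounded_return (hΩ : Om φ = ∅) {K : Set X} (hK : IsCompact K) :
    ∃ T : ℝ, 1 ≤ T ∧ ∀ t x, x ∈ K → φ (t, x) ∈ K → |t| ≤ T := by
  by_contra hcon
  push_neg at hcon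
  set C : Ici (1:ℝ) → Set (X × X) := fun i => (K ×ˢ K) ∩ closure (ST φ i) with hCdef
  haveI : Nonempty (Ici (1:ℝ)) := ⟨⟨1, mem_Ici.mpr (le_refl 1)⟩⟩
  have hne : ∀ i, (C i).Nonempty := by
    rintro ⟨i, hi⟩
    obtain ⟨t, x, hxK, hφxK, hti⟩ := hcon i hi
    rcases le_total 0 t with ht | ht
    · refine ⟨(x, φ (t, x)), ⟨⟨hxK, hφxK⟩, subset_closure ⟨t, ?_, rfl⟩⟩⟩
      rw [abs_of_nonneg ht] at hti; linarith
    · refine ⟨(φ (t, x), x), ⟨⟨hφxK, hxK⟩, subset_closure ⟨-t, ?_, (phi_neg φ hφ0 hφadd t x).symm⟩⟩⟩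
      rw [abs_of_nonpos ht] at hti; linarith
  have hdir : Directed (· ⊇ ·) C := by
    rintro ⟨i, hi⟩ ⟨j, hj⟩
    refine ⟨⟨max i j, mem_Ici.mpr (le_trans hi (le_max_left _ _))⟩, ?_, ?_⟩
    · exact inter_subset_inter_right _ (closure_mono (ST_antitone φ (le_max_left _ _)))
    · exact inter_subset_inter_right _ (closure_mono (ST_antitone φ (le_max_right _ _)))
  have hcpt : ∀ i, IsCompact (C i) := fun i => (hK.prod hK).inter_right isClosed_closure
  have hcl : ∀ i, IsClosed (C i) := fun i => ((hK.prod hK).isClosed).inter isClosed_closure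
  obtain ⟨p, hp⟩ := IsCompact.nonempty_iInter_of_directed_nonempty_isCompact_isClosed
    C hdir hne hcpt hcl
  have : p ∈ Om φ := by
    rw [Om, mem_iInter₂]
    intro T hT
    have h1 : p ∈ C ⟨max T 1, mem_Ici.mpr (le_max_right _ _)⟩ := mem_iInter.mp hp _
    exact closure_mono (ST_antitone φ (le_max_left _ _)) h1.2
  rw [hΩ] at this; exact this

include hφc hφ0 hφadd in
/-- (iii) → (ii). -/
theorem omega_empty_of_parallel {Y : Type u} [TopologicalSpace Y] {h : ℝ × Y → X}
    (hh : IsHomeomorph h) (heq : ∀ (t s : ℝ) (y : Y), φ (t, h (s, y)) = h (t + s, y)) :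
    Om φ = ∅ := by
  set e := hh.homeomorph h with he
  set f : X × X → ℝ := fun p => (e.symm p.2).1 - (e.symm p.1).1 with hf
  have hfc : Continuous f := ((continuous_fst.comp (e.symm.continuous.comp continuous_snd))).sub
    ((continuous_fst.comp (e.symm.continuous.comp continuous_fst)))
  have hsub : ∀ T : ℝ, closure (ST φ T) ⊆ f ⁻¹' Ici T := by
    intro T
    refine closure_minimal ?_ (isClosed_Ici.preimage hfc)
    rintro ⟨x, y⟩ ⟨t, ht, hxy⟩
    have hex : ∀ a : ℝ × Y, e a = h a := fun a => by simp [he]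
    have hy : y = e (t + (e.symm x).1, (e.symm x).2) := by
      calc y = φ (t, x) := hxy
      _ = φ (t, h ((e.symm x).1, (e.symm x).2)) := by
          rw [← hex]; rw [Prod.mk.eta, e.apply_symm_apply]
      _ = h (t + (e.symm x).1, (e.symm x).2) := heq _ _ _
      _ = e (t + (e.symm x).1, (e.symm x).2) := (hex _).symm
    have h2 : e.symm y = (t + (e.symm x).1, (e.symm x).2) := by
      rw [hy, e.symm_apply_apply]
    simp only [hf, mem_preimage, mem_Ici, h2]
    linarith
  ext p
  simp only [mem_empty_iff_false, iff_false]
  intro hp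
  rw [Om, mem_iInter₂] at hp
  have h0 : f p ∈ Ici (0:ℝ) := hsub 0 (hp 0 (mem_Ici.mpr (le_refl 0)))
  have h1 : f p ∈ Ici (f p + 1) := hsub _ (hp (f p + 1) (mem_Ici.mpr (by simp only [mem_Ici] at h0; linarith)))
  simp only [mem_Ici] at h1
  linarith

section LocalSection

variable [LocallyCompactSpace X] [SigmaCompactSpace X]

include hφc hφ0 hφadd in
/-- Main local structure theorem: through every point of a flow with empty `Ω` there is a
saturated open set carrying a continuous equivariant time function. -/
theorem local_section (hΩ : Om φ = ∅) (x₀ : X) :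
    ∃ (V : Set X) (τ : X → ℝ), IsOpen V ∧ x₀ ∈ V ∧
      (∀ (t : ℝ) (z : X), z ∈ V → φ (t, z) ∈ V) ∧
      (∀ z ∈ V, ContinuousAt τ z) ∧
      (∀ (t : ℝ) (z : X), z ∈ V → τ (φ (t, z)) = τ z + t) := by
  have hNP := noPeriodic_of_omega_empty φ hφc hφ0 hφadd hΩ
  have hinj : ∀ (t : ℝ) (x : X), φ (t, x) = x → t = 0 :=
    fun t x h => periodic_of_ne φ hφ0 hφadd hNP h
  -- the two compact orbit arcs
  have horb : Continuous fun u : ℝ => φ (u, x₀) := hφc.comp (continuous_id.prodMk continuous_const)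
  set K₁ : Set X := (fun u : ℝ => φ (u, x₀)) '' Icc (-(1/4)) (1/4) with hK₁def
  set K₂ : Set X := (fun u : ℝ => φ (u, x₀)) '' Icc (3/4) (5/4) with hK₂def
  have hK₁ : IsCompact K₁ := isCompact_Icc.image horb
  have hK₂ : IsCompact K₂ := isCompact_Icc.image horb
  have hd : Disjoint K₁ K₂ := by
    rw [Set.disjoint_left]
    rintro a ⟨u, hu, rfl⟩ ⟨v, hv, hv2⟩
    have := inj_time φ hφ0 hφadd hNP hv2
    rw [this] at hv
    have h1 := hu.2; have h2 := hv.1; simp only [mem_Icc] at *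
    linarith [hu.2, hv.1]
  obtain ⟨O₁, O₂, hO₁, hO₂, hKO₁, hKO₂, hOd⟩ :=
    SeparatedNhds.of_isCompact_isCompact_isClosed hK₁ hK₂ hK₂.isClosed hd
  obtain ⟨O₁', hO₁', hKO₁', hclO₁'⟩ := normal_exists_closure_subset hK₁.isClosed hO₁ hKO₁
  -- Urysohn function
  obtain ⟨f, hf0, hf1, hf01⟩ :=
    exists_continuous_zero_one_of_isClosed (isClosed_compl_iff.mpr hO₁) isClosed_closure
      (disjoint_compl_left_iff_subset.mpr hclO₁')
  -- the neighborhood `N`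
  set N : Set X := {y | ∀ u ∈ Icc (-(1/4):ℝ) (1/4), φ (u, y) ∈ O₁'} ∩
      {y | ∀ u ∈ Icc (3/4:ℝ) (5/4), φ (u, y) ∈ O₂} with hNdef
  have hNopen : IsOpen N :=
    (isOpen_forall_slice hφc isCompact_Icc hO₁').inter
      (isOpen_forall_slice hφc isCompact_Icc hO₂)
  have hx₀N : x₀ ∈ N := by
    constructor
    · intro u hu; exact hKO₁' ⟨u, hu, rfl⟩
    · intro u hu; exact hKO₂ ⟨u, hu, rfl⟩
  -- the Bebutov integral function
  have hfφ : Continuous fun p : ℝ × X => f (φ p) := f.continuous.comp hφc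
  have hsl : ∀ y : X, Continuous fun s : ℝ => f (φ (s, y)) :=
    fun y => hfφ.comp (continuous_id.prodMk continuous_const)
  have hint : ∀ (y : X) (a b : ℝ),
      IntervalIntegrable (fun s => f (φ (s, y))) MeasureTheory.volume a b :=
    fun y a b => (hsl y).intervalIntegrable a b
  set g : X → ℝ := fun y => ∫ s in (0:ℝ)..1, f (φ (s, y)) with hgdef
  have hgc : Continuous g := by
    rw [continuous_iff_continuousAt]
    intro y₀
    rw [ContinuousAt, Metric.tendsto_nhds]
    intro ε hε
    set W : Set X :=
      {y | ∀ u ∈ Icc (0:ℝ) 1, |f (φ (u, y)) - f (φ (u, y₀))| ∈ Iio (ε/2)} with hWdef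
    have hWopen : IsOpen W := by
      apply isOpen_forall_slice (Z := ℝ)
        (F := fun p : ℝ × X => |f (φ p) - f (φ (p.1, y₀))|) ?_ isCompact_Icc isOpen_Iio
      exact (hfφ.sub (hfφ.comp (continuous_fst.prodMk continuous_const))).abs
    have hy₀W : y₀ ∈ W := by
      intro u hu; simp [mem_Iio]; positivity
    filter_upwards [hWopen.mem_nhds hy₀W] with y hy
    have hsub : g y - g y₀ = ∫ s in (0:ℝ)..1, (f (φ (s, y)) - f (φ (s, y₀))) := by
      rw [hgdef]; exact (intervalIntegral.integral_sub (hint y 0 1) (hint y₀ 0 1)).symm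
    have hbound : ‖g y - g y₀‖ ≤ (ε/2) * |1 - (0:ℝ)| := by
      rw [hsub]
      refine intervalIntegral.norm_integral_le_of_norm_le_const ?_
      intro u hu
      have hu' : u ∈ Icc (0:ℝ) 1 := Ioc_subset_Icc_self (by rwa [Set.uIoc_of_le (by norm_num)] at hu)
      exact le_of_lt (hy u hu')
    rw [Real.dist_eq, ← Real.norm_eq_abs]
    calc ‖g y - g y₀‖ ≤ (ε/2) * |1 - (0:ℝ)| := hbound
    _ < ε := by rw [show |1 - (0:ℝ)| = 1 by norm_num]; linarith
  -- key identity
  have hgkey : ∀ y ∈ N, ∀ t ∈ Icc (-(1/4):ℝ) (1/4), g (φ (t, y)) = g y - t := by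
    intro y hy t ht
    have step1 : g (φ (t, y)) = ∫ s in (0:ℝ)..1, f (φ (s + t, y)) := by
      rw [hgdef]
      simp only [hφadd]
    have step2 : (∫ s in (0:ℝ)..1, f (φ (s + t, y))) = ∫ u in t..(1+t), f (φ (u, y)) := by
      rw [intervalIntegral.integral_comp_add_right (fun u => f (φ (u, y))) t, zero_add]
    have step3 : (∫ u in t..(1+t), f (φ (u, y)))
        = (∫ u in t..(0:ℝ), f (φ (u, y))) + (∫ u in (0:ℝ)..1, f (φ (u, y)))
          + ∫ u in (1:ℝ)..(1+t), f (φ (u, y)) := by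
      rw [intervalIntegral.integral_add_adjacent_intervals (hint y t 0) (hint y 0 1),
        intervalIntegral.integral_add_adjacent_intervals (hint y t 1) (hint y 1 (1+t))]
    have step4 : (∫ u in t..(0:ℝ), f (φ (u, y))) = -t := by
      have hsub : Set.uIcc t (0:ℝ) ⊆ Icc (-(1/4)) (1/4) := by
        intro u hu
        rcases Set.mem_uIcc.mp hu with ⟨h1, h2⟩ | ⟨h1, h2⟩ <;>
          (simp only [mem_Icc] at ht ⊢; constructor <;> linarith [ht.1, ht.2])
      have : EqOn (fun u => f (φ (u, y))) (fun _ => (1:ℝ)) (Set.uIcc t 0) := by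
        intro u hu
        have : φ (u, y) ∈ O₁' := hy.1 u (hsub hu)
        exact hf1 (subset_closure this)
      rw [intervalIntegral.integral_congr this, intervalIntegral.integral_const, smul_eq_mul]
      ring
    have step5 : (∫ u in (1:ℝ)..(1+t), f (φ (u, y))) = 0 := by
      have hsub : Set.uIcc (1:ℝ) (1+t) ⊆ Icc (3/4) (5/4) := by
        intro u hu
        rcases Set.mem_uIcc.mp hu with ⟨h1, h2⟩ | ⟨h1, h2⟩ <;>
          (simp only [mem_Icc] at ht ⊢; constructor <;> linarith [ht.1, ht.2])
      have : EqOn (fun u => f (φ (u, y))) (fun _ => (0:ℝ)) (Set.uIcc 1 (1+t)) := by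
        intro u hu
        have h2 : φ (u, y) ∈ O₂ := hy.2 u (hsub hu)
        have h3 : φ (u, y) ∈ O₁ᶜ := fun hmem => (Set.disjoint_left.mp hOd hmem) h2
        exact hf0 h3
      rw [intervalIntegral.integral_congr this]
      simp
    rw [step1, step2, step3, step4, step5, hgdef]
    ring
  -- time-normalising function
  set θ : X → ℝ := fun y => g y - g x₀ with hθdef
  have hθc : Continuous θ := hgc.sub continuous_const
  -- compact neighbourhood inside N
  obtain ⟨D₀, hD₀cpt, hx₀D₀, hD₀N⟩ := exists_compact_subset hNopen hx₀N
  -- bounded return times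
  obtain ⟨T, hT1, hT⟩ := bounded_return φ hφc hφ0 hφadd hΩ hD₀cpt
  -- excluded middle return window
  set J : Set ℝ := Icc (-T) (-(1/4)) ∪ Icc (1/4) T with hJdef
  have hJcpt : IsCompact J := isCompact_Icc.union isCompact_Icc
  have hJcl : IsClosed J := isClosed_Icc.union isClosed_Icc
  set E : Set (ℝ × X) := {p | p.1 ∈ J ∧ p.2 ∈ D₀ ∧ φ p ∈ D₀} with hEdef
  have hEcl : IsClosed E := by
    refine (hJcl.preimage continuous_fst).inter
      ((hD₀cpt.isClosed.preimage continuous_snd).inter (hD₀cpt.isClosed.preimage hφc))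
  have hEcpt : IsCompact E := (hJcpt.prod hD₀cpt).of_isClosed_subset hEcl
    (fun p hp => ⟨hp.1, hp.2.1⟩)
  set Fs : Set (X × X) := (fun p : ℝ × X => (p.2, φ p)) '' E with hFsdef
  have hFscpt : IsCompact Fs := hEcpt.image (continuous_snd.prodMk hφc)
  have hx₀Fs : (x₀, x₀) ∉ Fs := by
    rintro ⟨⟨t, x⟩, ⟨htJ, _, _⟩, heq2⟩
    simp only [Prod.mk.injEq] at heq2
    obtain ⟨hx, hphi⟩ := heq2
    rw [hx] at hphi
    have := hinj t x₀ hphi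
    rw [this] at htJ
    rcases htJ with h | h <;> (simp only [mem_Icc] at h; linarith [h.1, h.2])
  obtain ⟨A, B, hA, hB, hx₀A, hx₀B, hABF⟩ :=
    isOpen_prod_iff.mp hFscpt.isClosed.isOpen_compl x₀ x₀ hx₀Fs
  set D₁ : Set X := interior D₀ ∩ (A ∩ B) with hD₁def
  have hD₁open : IsOpen D₁ := isOpen_interior.inter (hA.inter hB)
  have hx₀D₁ : x₀ ∈ D₁ := ⟨hx₀D₀, hx₀A, hx₀B⟩
  -- the section
  set Sset : Set X := {y | y ∈ N ∧ y ∈ D₁ ∧ g y = g x₀} with hSdef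
  -- each orbit meets the section at most once
  have honce : ∀ (s : X) (t : ℝ), s ∈ Sset → φ (t, s) ∈ Sset → t = 0 := by
    intro s t hs hts
    by_contra hne
    have hsD₀ : s ∈ D₀ := interior_subset hs.2.1.1
    have htsD₀ : φ (t, s) ∈ D₀ := interior_subset hts.2.1.1
    have habs : |t| ≤ T := hT t s hsD₀ htsD₀
    rcases le_or_gt (|t|) (1/4) with hcase | hcase
    · have ht' : t ∈ Icc (-(1/4):ℝ) (1/4) := by
        rw [mem_Icc]; constructor <;> [linarith [neg_abs_le t]; linarith [le_abs_self t]]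
      have := hgkey s hs.1 t ht'
      rw [hts.2.2, hs.2.2] at this
      have : t = 0 := by linarith
      exact hne this
    · have htJ : t ∈ J := by
        rcases le_or_gt 0 t with h | h
        · right; rw [mem_Icc]; rw [abs_of_nonneg h] at hcase habs; constructor <;> linarith
        · left; rw [mem_Icc]; rw [abs_of_neg h] at hcase habs; constructor <;> linarith
      have hmem : ((s, φ (t, s)) : X × X) ∈ Fs := ⟨(t, s), ⟨htJ, hsD₀, htsD₀⟩, rfl⟩
      have : (s, φ (t, s)) ∈ A ×ˢ B := ⟨hs.2.1.2.1, hts.2.1.2.2⟩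
      exact (hABF this) hmem
  -- the tube
  set U : Set X := {y | y ∈ N ∧ |θ y| < 1/4 ∧ φ (θ y, y) ∈ N ∩ D₁} with hUdef
  have hπc : Continuous fun y => φ (θ y, y) := hφc.comp (hθc.prodMk continuous_id)
  have hUopen : IsOpen U := by
    refine IsOpen.inter hNopen (IsOpen.inter ?_ ?_)
    · exact isOpen_Iio.preimage (continuous_abs.comp hθc)
    · exact (hNopen.inter hD₁open).preimage hπc
  have hθx₀ : θ x₀ = 0 := by rw [hθdef]; simp
  have hx₀U : x₀ ∈ U := by
    refine ⟨hx₀N, ?_, ?_⟩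
    · rw [hθx₀]; norm_num
    · rw [hθx₀, hφ0]; exact ⟨hx₀N, hx₀D₁⟩
  have hUS : ∀ y ∈ U, φ (θ y, y) ∈ Sset := by
    intro y hy
    refine ⟨hy.2.2.1, hy.2.2.2, ?_⟩
    have hmem : θ y ∈ Icc (-(1/4):ℝ) (1/4) := by
      have h3 := abs_le.mp hy.2.1.le
      rw [mem_Icc]
      exact h3
    have := hgkey y hy.1 (θ y) hmem
    rw [this, hθdef]
    ring
  -- the saturated open set
  set V : Set X := {z | ∃ t : ℝ, φ (t, z) ∈ U} with hVdef
  have hVopen : IsOpen V := by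
    have : V = ⋃ t : ℝ, (fun z => φ (t, z)) ⁻¹' U := by
      ext z; simp [hVdef]
    rw [this]
    exact isOpen_iUnion fun t => hUopen.preimage (hφc.comp (continuous_const.prodMk continuous_id))
  have hx₀V : x₀ ∈ V := ⟨0, by rwa [hφ0]⟩
  have hVsat : ∀ (t : ℝ) (z : X), z ∈ V → φ (t, z) ∈ V := by
    rintro t z ⟨r, hr⟩
    exact ⟨r - t, by rwa [hφadd, sub_add_cancel]⟩
  -- uniqueness of the section time
  have huniq : ∀ (z : X) (r₁ r₂ : ℝ), φ (-r₁, z) ∈ Sset → φ (-r₂, z) ∈ Sset → r₁ = r₂ := by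
    intro z r₁ r₂ h1 h2
    have hrel : φ (r₁ - r₂, φ (-r₁, z)) = φ (-r₂, z) := by
      rw [hφadd]; congr 1; ring_nf
    have := honce _ (r₁ - r₂) h1 (by rwa [hrel])
    linarith
  have hVex : ∀ z ∈ V, ∃ r : ℝ, φ (-r, z) ∈ Sset := by
    rintro z ⟨t, ht⟩
    refine ⟨-(θ (φ (t, z)) + t), ?_⟩
    rw [neg_neg]
    have : φ (θ (φ (t, z)) + t, z) = φ (θ (φ (t, z)), φ (t, z)) := by rw [hφadd]
    rw [this]
    exact hUS _ ht
  -- the local time function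
  classical
  set τ : X → ℝ := fun z => if hz : ∃ r : ℝ, φ (-r, z) ∈ Sset then hz.choose else 0 with hτdef
  have hτspec : ∀ z ∈ V, φ (-(τ z), z) ∈ Sset := by
    intro z hz
    have he := hVex z hz
    rw [hτdef]
    simp only [dif_pos he]
    exact he.choose_spec
  have hτval : ∀ (z : X) (r : ℝ), φ (-r, z) ∈ Sset → τ z = r := by
    intro z r hr
    have he : ∃ r : ℝ, φ (-r, z) ∈ Sset := ⟨r, hr⟩
    have h1 : φ (-(τ z), z) ∈ Sset := by
      rw [hτdef]; simp only [dif_pos he]; exact he.choose_spec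
    exact huniq z (τ z) r h1 hr
  have hτequi : ∀ (t : ℝ) (z : X), z ∈ V → τ (φ (t, z)) = τ z + t := by
    intro t z hz
    apply hτval
    have : φ (-(τ z + t), φ (t, z)) = φ (-(τ z), z) := by
      rw [hφadd]; congr 1; ring_nf
    rw [this]
    exact hτspec z hz
  have hτcont : ∀ z ∈ V, ContinuousAt τ z := by
    rintro z₀ ⟨t₀, ht₀⟩
    set c : X → ℝ := fun z => -(θ (φ (t₀, z)) + t₀) with hcdef
    have hcc : Continuous c := by
      apply Continuous.neg
      exact (hθc.comp (hφc.comp (continuous_const.prodMk continuous_id))).add continuous_const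
    set W : Set X := (fun z => φ (t₀, z)) ⁻¹' U with hWdef
    have hWopen : IsOpen W := hUopen.preimage (hφc.comp (continuous_const.prodMk continuous_id))
    have hzW : z₀ ∈ W := ht₀
    have heqW : ∀ z ∈ W, τ z = c z := by
      intro z hz
      apply hτval
      rw [hcdef]
      simp only [neg_neg]
      have : φ (θ (φ (t₀, z)) + t₀, z) = φ (θ (φ (t₀, z)), φ (t₀, z)) := by rw [hφadd]
      rw [this]
      exact hUS _ hz
    have : τ =ᶠ[nhds z₀] c :=
      Filter.eventually_of_mem (hWopen.mem_nhds hzW) heqW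
    exact (hcc.continuousAt).congr this.symm
  exact ⟨V, τ, hVopen, hx₀V, hVsat, hτcont, hτequi⟩

include hφc hφ0 hφadd in
/-- Gluing the local time functions: a global continuous equivariant time function. -/
theorem global_time (hΩ : Om φ = ∅) :
    ∃ τ : X → ℝ, Continuous τ ∧ ∀ (t : ℝ) (z : X), τ (φ (t, z)) = τ z + t := by
  classical
  -- the orbit equivalence relation
  letI Sd : Setoid X :=
    ⟨fun x y => ∃ t : ℝ, y = φ (t, x),
      ⟨fun x => ⟨0, (hφ0 x).symm⟩,
        fun {x y} => by rintro ⟨t, rfl⟩; exact ⟨-t, (phi_neg φ hφ0 hφadd t x).symm⟩,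
        fun {x y z} => by rintro ⟨t, rfl⟩ ⟨s, rfl⟩; exact ⟨s + t, hφadd s t x⟩⟩⟩
  set q : X → Quotient Sd := Quotient.mk' with hqdef
  have hqc : Continuous q := continuous_quotient_mk'
  have hqsurj : Function.Surjective q := Quotient.mk'_surjective
  have hqrel : ∀ {x y : X}, q x = q y ↔ ∃ t : ℝ, y = φ (t, x) := fun {x y} =>
    ⟨fun h => Quotient.exact' h, fun h => Quotient.sound' h⟩
  -- `q` is an open map
  have hpreim : ∀ U : Set X, q ⁻¹' (q '' U) = ⋃ t : ℝ, (fun z => φ (t, z)) ⁻¹' U := by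
    intro U
    ext z
    simp only [mem_preimage, mem_image, mem_iUnion]
    constructor
    · rintro ⟨u, hu, hq⟩
      obtain ⟨t, rfl⟩ := hqrel.mp hq
      refine ⟨-t, ?_⟩
      show φ (-t, φ (t, u)) ∈ U
      rwa [phi_neg φ hφ0 hφadd]
    · rintro ⟨t, ht⟩
      exact ⟨φ (t, z), ht, (hqrel.mpr ⟨t, rfl⟩).symm⟩
  have hqopen : IsOpenMap q := by
    intro U hU
    rw [← isQuotientMap_quotient_mk'.isOpen_preimage]
    rw [hpreim U]
    exact isOpen_iUnion fun t =>
      hU.preimage (hφc.comp (continuous_const.prodMk continuous_id))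
  -- the orbit space is Hausdorff
  have hS0closed := isClosed_S0_of_omega_empty φ hφc hφ0 hφadd hΩ
  have hRclosed : IsClosed {p : X × X | ∃ t : ℝ, p.2 = φ (t, p.1)} := by
    have hunion : {p : X × X | ∃ t : ℝ, p.2 = φ (t, p.1)}
        = ST φ 0 ∪ Prod.swap ⁻¹' (ST φ 0) := by
      ext ⟨x, y⟩
      simp only [mem_setOf_eq, mem_union, mem_preimage]
      constructor
      · rintro ⟨t, rfl⟩
        rcases le_or_gt 0 t with h | h
        · exact Or.inl ⟨t, h, rfl⟩
        · refine Or.inr ⟨-t, by linarith, ?_⟩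
          show x = φ (-t, φ (t, x))
          rw [phi_neg φ hφ0 hφadd]
      · rintro (⟨t, ht, h⟩ | ⟨t, ht, h⟩)
        · exact ⟨t, h⟩
        · refine ⟨-t, ?_⟩
          show y = φ (-t, x)
          rw [show (x : X) = φ (t, y) from h]
          rw [phi_neg φ hφ0 hφadd]
    rw [hunion]
    exact hS0closed.union (hS0closed.preimage continuous_swap)
  haveI hT2 : T2Space (Quotient Sd) := by
    refine t2_iff_isClosed_diagonal.mpr ?_
    rw [← isOpen_compl_iff]
    have hcompl : (Set.diagonal (Quotient Sd))ᶜ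
        = Prod.map q q '' {p : X × X | ∃ t : ℝ, p.2 = φ (t, p.1)}ᶜ := by
      apply Set.eq_of_subset_of_subset
      · rintro ⟨a, b⟩ hab
        obtain ⟨x, rfl⟩ := hqsurj a
        obtain ⟨y, rfl⟩ := hqsurj b
        refine ⟨(x, y), ?_, rfl⟩
        intro hrel
        exact hab (show q x = q y from hqrel.mpr hrel)
      · rintro ⟨a, b⟩ ⟨⟨x, y⟩, hxy, heq⟩
        have h1 : q x = a := congrArg Prod.fst heq
        have h2 : q y = b := congrArg Prod.snd heq
        rw [← h1, ← h2]
        intro hd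
        exact hxy (hqrel.mp (show q x = q y from hd))
    rw [hcompl]
    exact (hqopen.prodMap hqopen) _ hRclosed.isOpen_compl
  haveI : LocallyCompactSpace (Quotient Sd) := by
    constructor
    intro z n hn
    obtain ⟨x, rfl⟩ := hqsurj z
    have h1 : q ⁻¹' n ∈ nhds x := hqc.continuousAt.preimage_mem_nhds hn
    obtain ⟨s, hs, hsub, hscpt⟩ := LocallyCompactSpace.local_compact_nhds x (q ⁻¹' n) h1
    refine ⟨q '' s, ?_, ?_, hscpt.image hqc⟩
    · obtain ⟨O, hOs, hOopen, hxO⟩ := mem_nhds_iff.mp hs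
      exact Filter.mem_of_superset ((hqopen O hOopen).mem_nhds ⟨x, hxO, rfl⟩)
        (image_mono (f := q) hOs)
    · rintro w ⟨u, hu, rfl⟩
      exact hsub hu
  haveI : SigmaCompactSpace (Quotient Sd) := by
    refine ⟨?_⟩
    have := (isSigmaCompact_univ (X := X)).image hqc
    rwa [image_univ, Set.range_eq_univ.mpr hqsurj] at this
  -- local data
  choose V τV hVopen hVmem hVsat hVcont hVequi using
    fun z : Quotient Sd => local_section φ hφc hφ0 hφadd hΩ (Quotient.out z)
  set W : Quotient Sd → Set (Quotient Sd) := fun i => q '' V i with hWdef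
  have hWopen : ∀ i, IsOpen (W i) := fun i => hqopen _ (hVopen i)
  have hWcover : (univ : Set (Quotient Sd)) ⊆ ⋃ i, W i := by
    intro z _
    refine mem_iUnion.mpr ⟨z, ⟨Quotient.out z, hVmem z, ?_⟩⟩
    exact Quotient.out_eq' z
  obtain ⟨ρ, hρ⟩ := PartitionOfUnity.exists_isSubordinate isClosed_univ W hWopen hWcover
  have hVpre : ∀ i, q ⁻¹' (W i) = V i := by
    intro i
    ext z
    simp only [hWdef, mem_preimage, mem_image]
    constructor
    · rintro ⟨v, hv, hq⟩
      obtain ⟨t, rfl⟩ := hqrel.mp hq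
      exact hVsat i t v hv
    · intro hz; exact ⟨z, hz, rfl⟩
  have hsupp : ∀ (i : Quotient Sd) (z : X), ρ i (q z) ≠ 0 → z ∈ V i := by
    intro i z h
    have h1 : q z ∈ tsupport (ρ i) := subset_tsupport _ h
    have h2 : q z ∈ W i := hρ i h1
    rw [← hVpre i]
    exact h2
  set τ : X → ℝ := fun z => ∑ᶠ i, ρ i (q z) * τV i z with hτdef
  have hterm : ∀ i, Continuous fun z => ρ i (q z) * τV i z := by
    intro i
    rw [continuous_iff_continuousAt]
    intro z
    by_cases hz : z ∈ V i
    · exact (((ρ i).continuous.comp hqc).continuousAt).mul (hVcont i z hz)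
    · have hop : IsOpen ((q ⁻¹' tsupport (ρ i))ᶜ) :=
        ((isClosed_tsupport _).preimage hqc).isOpen_compl
      have hzmem : z ∈ (q ⁻¹' tsupport (ρ i))ᶜ := by
        intro hmem
        refine hz ?_
        rw [← hVpre i]
        exact hρ i hmem
      have hev : (fun z => ρ i (q z) * τV i z) =ᶠ[nhds z] fun _ => 0 := by
        filter_upwards [hop.mem_nhds hzmem] with w hw
        have hw0 : ρ i (q w) = 0 := by
          by_contra h
          exact hw (subset_tsupport (ρ i) h)
        rw [hw0, zero_mul]
      exact continuousAt_const.congr hev.symm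
  have hLF : LocallyFinite fun i => Function.support fun z => ρ i (q z) * τV i z := by
    refine (ρ.locallyFinite.preimage_continuous hqc).subset ?_
    intro i z hz
    simp only [Function.mem_support, mem_preimage] at hz ⊢
    exact fun h => hz (by rw [h, zero_mul])
  have hτc : Continuous τ := continuous_finsum hterm hLF
  have hτequi : ∀ (t : ℝ) (z : X), τ (φ (t, z)) = τ z + t := by
    intro t z
    have hq2 : q (φ (t, z)) = q z := (hqrel.mpr ⟨t, rfl⟩).symm
    have hfin0 : {i : Quotient Sd | q z ∈ Function.support fun w => ρ i w}.Finite :=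
      ρ.locallyFinite.point_finite (q z)
    have hfin1 : (Function.support fun i => ρ i (q z) * τV i z).Finite := by
      refine hfin0.subset ?_
      intro i hi
      simp only [Function.mem_support] at hi ⊢
      exact fun h => hi (by rw [h, zero_mul])
    have hfin2 : (Function.support fun i => ρ i (q z) * t).Finite := by
      refine hfin0.subset ?_
      intro i hi
      simp only [Function.mem_support] at hi ⊢
      exact fun h => hi (by rw [h, zero_mul])
    have hfin3 : (Function.support fun i => ρ i (q z)).Finite := by
      refine hfin0.subset ?_
      intro i hi
      simp only [Function.mem_support] at hi ⊢
      exact hi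
    have hterm_eq : ∀ i, ρ i (q z) * τV i (φ (t, z)) = ρ i (q z) * τV i z + ρ i (q z) * t := by
      intro i
      by_cases hz : z ∈ V i
      · rw [hVequi i t z hz]; ring
      · have h0 : ρ i (q z) = 0 := by
          by_contra h
          exact hz (hsupp i z h)
        rw [h0]; ring
    calc τ (φ (t, z)) = ∑ᶠ i, ρ i (q (φ (t, z))) * τV i (φ (t, z)) := rfl
    _ = ∑ᶠ i, (ρ i (q z) * τV i z + ρ i (q z) * t) := by
        rw [hq2]; exact finsum_congr hterm_eq
    _ = (∑ᶠ i, ρ i (q z) * τV i z) + ∑ᶠ i, ρ i (q z) * t := finsum_add_distrib hfin1 hfin2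
    _ = τ z + (∑ᶠ i, ρ i (q z)) * t := by
        rw [finsum_mul _ t]
    _ = τ z + t := by
        rw [ρ.sum_eq_one (mem_univ _), one_mul]
  exact ⟨τ, hτc, hτequi⟩

include hφc hφ0 hφadd in
theorem parallelizable_of_omega_empty (hΩ : Om φ = ∅) :
    ∃ (Y : Type u) (tY : TopologicalSpace Y) (h : ℝ × Y → X),
      IsHomeomorph h ∧ ∀ (t s : ℝ) (y : Y), φ (t, h (s, y)) = h (t + s, y) := by
  obtain ⟨τ, hτc, hτe⟩ := global_time φ hφc hφ0 hφadd hΩ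
  refine ⟨{x : X // τ x = 0}, inferInstance, fun p => φ (p.1, p.2.1), ?_, ?_⟩
  · have hcont : Continuous fun p : ℝ × {x : X // τ x = 0} => φ (p.1, p.2.1) :=
      hφc.comp (continuous_fst.prodMk (continuous_subtype_val.comp continuous_snd))
    have hzero : ∀ x : X, τ (φ (-τ x, x)) = 0 := fun x => by rw [hτe]; ring
    set inv : X → ℝ × {x : X // τ x = 0} := fun x => (τ x, ⟨φ (-τ x, x), hzero x⟩) with hinv
    have hinvc : Continuous inv := by
      refine hτc.prodMk (Continuous.subtype_mk ?_ _)
      exact hφc.comp ((hτc.neg).prodMk continuous_id)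
    have hli : ∀ p : ℝ × {x : X // τ x = 0}, inv (φ (p.1, p.2.1)) = p := by
      rintro ⟨t, ⟨y, hy⟩⟩
      have h1 : τ (φ (t, y)) = t := by rw [hτe, hy, zero_add]
      rw [hinv]
      refine Prod.ext h1 (Subtype.ext ?_)
      show φ (-τ (φ (t, y)), φ (t, y)) = y
      rw [h1, phi_neg φ hφ0 hφadd]
    have hri : ∀ x : X, φ ((inv x).1, (inv x).2.1) = x := by
      intro x
      show φ (τ x, φ (-τ x, x)) = x
      rw [hφadd, add_neg_cancel, hφ0]
    exact (Homeomorph.mk ⟨fun p : ℝ × {x : X // τ x = 0} => φ (p.1, p.2.1), inv, hli, hri⟩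
      hcont hinvc).isHomeomorph
  · intro t s y
    exact hφadd t s y.1

end LocalSection

end
end Par17c


open Par17c in
/-- For a flow `φ` on a locally compact, σ-compact Hausdorff space `X`,
the following are equivalent: (i) the orbit relation `𝒪φ` is closed and there are no
periodic points; (ii) `Ωφ = ∅`; (iii) `φ` is parallelizable. -/
theorem parallelizable_iff
    {X : Type u} [TopologicalSpace X] [LocallyCompactSpace X]
    [SigmaCompactSpace X] [T2Space X]
    (φ : ℝ × X → X) (hφc : Continuous φ)
    (hφ0 : ∀ x : X, φ (0, x) = x)
    (hφadd : ∀ (t s : ℝ) (x : X), φ (t, φ (s, x)) = φ (t + s, x)) :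
    ((IsClosed {p : X × X | ∃ t : ℝ, 0 ≤ t ∧ p.2 = φ (t, p.1)} ∧
        ¬ ∃ (x : X) (t : ℝ), 1 ≤ t ∧ φ (t, x) = x) ↔
      (⋂ T ∈ Set.Ici (0:ℝ),
          closure {p : X × X | ∃ t : ℝ, T ≤ t ∧ p.2 = φ (t, p.1)}) = ∅) ∧
    ((⋂ T ∈ Set.Ici (0:ℝ),
          closure {p : X × X | ∃ t : ℝ, T ≤ t ∧ p.2 = φ (t, p.1)}) = ∅ ↔
      ∃ (Y : Type u) (tY : TopologicalSpace Y) (h : ℝ × Y → X),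
        @Parallelizes X _ φ Y tY h) := by
  constructor
  · constructor
    · rintro ⟨hC, hNP⟩
      exact omega_empty_of_isClosed_noPeriodic φ hφc hφ0 hφadd hC hNP
    · intro hΩ
      exact ⟨isClosed_S0_of_omega_empty φ hφc hφ0 hφadd hΩ,
        noPeriodic_of_omega_empty φ hφc hφ0 hφadd hΩ⟩
  · constructor
    · intro hΩ
      obtain ⟨Y, tY, h, hh, heq⟩ := parallelizable_of_omega_empty φ hφc hφ0 hφadd hΩ
      exact ⟨Y, tY, h, hh, heq⟩
    · rintro ⟨Y, tY, h, hh, heq⟩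
      exact omega_empty_of_parallel φ hφc hφ0 hφadd hh heq
end
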